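/- arXiv:2506.03745 — 6 statements merged into one kernel-verified Lean document; each statement's English description precedes it below -/
import Mathlib

section
/- Let N be a finitely generated free abelian group and τ : N → N a ℤ-linear involution (τ ∘ τ = id). Then there exist natural numbers u, v, w and a ℤ-linear isomorphism φ : N ≅ ℤ^u ⊕ ℤ^v ⊕ (ℤ²)^w such that φ ∘ τ ∘ φ⁻¹ acts as the identity on the factor ℤ^u, as multiplication by −1 on the factor ℤ^v, and as the coordinate swap (a,b) ↦ (b,a) on each of the w factors ℤ². Equivalently, every ℤ[τ]-lattice is a direct sum of copies of the elementary ℤ[τ]-lattices ℤ[1], ℤ[−1] and ℤ[τ]. -/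
namespace ZtauAux

lemma cons_add {n : ℕ} {M : Type*} [AddCommGroup M] (a b : M) (f g : Fin n → M) :
    (Fin.cons (a + b) (f + g) : Fin (n+1) → M) = Fin.cons a f + Fin.cons b g := by
  funext i
  refine Fin.cases ?_ ?_ i <;> simp

lemma cons_smul {n : ℕ} {M : Type*} [AddCommGroup M] [Module ℤ M] (c : ℤ) (a : M)
    (f : Fin n → M) : (Fin.cons (c • a) (c • f) : Fin (n+1) → M) = c • Fin.cons a f := by
  funext i
  refine Fin.cases ?_ ?_ i <;> simp

lemma cons_neg {n : ℕ} {M : Type*} [AddCommGroup M] (a : M) (f : Fin n → M) :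
    (Fin.cons (-a) (-f) : Fin (n+1) → M) = -Fin.cons a f := by
  funext i
  refine Fin.cases ?_ ?_ i <;> simp

lemma cons_swap {w : ℕ} (z : ℤ × ℤ) (r : Fin w → ℤ × ℤ) :
    (Fin.cons z.swap (fun i => (r i).swap) : Fin (w+1) → ℤ × ℤ) =
      fun i => ((Fin.cons z r : Fin (w+1) → ℤ × ℤ) i).swap := by
  funext i
  refine Fin.cases ?_ ?_ i <;> simp

/-- prepend to the second factor -/
noncomputable def consSnd (u v w : ℕ) :
    (ℤ × ((Fin u → ℤ) × (Fin v → ℤ) × (Fin w → ℤ × ℤ))) ≃ₗ[ℤ]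
      ((Fin u → ℤ) × (Fin (v+1) → ℤ) × (Fin w → ℤ × ℤ)) where
  toFun p := (p.2.1, Fin.cons p.1 p.2.2.1, p.2.2.2)
  map_add' p q := by
    refine Prod.ext rfl (Prod.ext ?_ rfl)
    simpa using (cons_add p.1 q.1 p.2.2.1 q.2.2.1)
  map_smul' c p := by
    refine Prod.ext rfl (Prod.ext ?_ rfl)
    simpa using (cons_smul c p.1 p.2.2.1)
  invFun p := (p.2.1 0, (p.1, Fin.tail p.2.1, p.2.2))
  left_inv p := by simp
  right_inv p := by simp

/-- prepend to the third factor -/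
noncomputable def consTrd (u v w : ℕ) :
    ((ℤ × ℤ) × ((Fin u → ℤ) × (Fin v → ℤ) × (Fin w → ℤ × ℤ))) ≃ₗ[ℤ]
      ((Fin u → ℤ) × (Fin v → ℤ) × (Fin (w+1) → ℤ × ℤ)) where
  toFun p := (p.2.1, p.2.2.1, Fin.cons p.1 p.2.2.2)
  map_add' p q := by
    refine Prod.ext rfl (Prod.ext rfl ?_)
    simpa using (cons_add p.1 q.1 p.2.2.2 q.2.2.2)
  map_smul' c p := by
    refine Prod.ext rfl (Prod.ext rfl ?_)
    simpa using (cons_smul c p.1 p.2.2.2)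
  invFun p := (p.2.2 0, (p.1, p.2.1, Fin.tail p.2.2))
  left_inv p := by simp
  right_inv p := by simp

/-- padding with two trivial factors -/
noncomputable def padEquiv (u : ℕ) :
    (Fin u → ℤ) ≃ₗ[ℤ] ((Fin u → ℤ) × (Fin 0 → ℤ) × (Fin 0 → ℤ × ℤ)) where
  toFun p := (p, 0, 0)
  map_add' p q := by refine Prod.ext rfl (Prod.ext ?_ ?_) <;> simp
  map_smul' c p := by refine Prod.ext rfl (Prod.ext ?_ ?_) <;> simp
  invFun t := t.1
  left_inv p := rfl
  right_inv t := by
    refine Prod.ext rfl (Prod.ext (Subsingleton.elim _ _) (Subsingleton.elim _ _))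

/-- Every nonzero element of a f.g. free ℤ-module is a multiple of a unimodular element. -/
lemma exists_unimodular {N : Type*} [AddCommGroup N] [Module ℤ N]
    [Module.Free ℤ N] [Module.Finite ℤ N] {a : N} (ha : a ≠ 0) :
    ∃ (d : ℤ) (a₀ : N) (h : N →ₗ[ℤ] ℤ), d ≠ 0 ∧ a = d • a₀ ∧ h a₀ = 1 := by
  classical
  obtain rfl : ‹Module ℤ N› = AddCommGroup.toIntModule N :=
    (AddCommGroup.uniqueIntModule).uniq _
  set ι := Module.Free.ChooseBasisIndex ℤ N
  set bN := Module.Free.chooseBasis ℤ N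
  set c : ι → ℤ := bN.equivFun a with hc_def
  have hc : c ≠ 0 := by
    intro h0
    apply ha
    apply bN.equivFun.injective (a₁ := a) (a₂ := 0)
    simpa [hc_def] using h0
  set d : ℤ := Finset.univ.gcd c with hd_def
  have hd0 : d ≠ 0 := by
    intro h0
    apply hc
    funext i
    exact Finset.gcd_eq_zero_iff.mp h0 i (Finset.mem_univ i)
  set c' : ι → ℤ := fun i => c i / d with hc'_def
  have hmul : ∀ i, d * c' i = c i := fun i =>
    Int.mul_ediv_cancel' (Finset.gcd_dvd (Finset.mem_univ i))
  have hspan : (1 : ℤ) ∈ Ideal.span (Set.range c') := by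
    obtain ⟨e, he⟩ := (IsPrincipalIdealRing.principal (Ideal.span (Set.range c'))).principal
    have hedvd : ∀ i, e ∣ c' i := by
      intro i
      rw [← Ideal.mem_span_singleton, ← Ideal.submodule_span_eq, ← he]
      exact Ideal.subset_span (Set.mem_range_self i)
    have h1 : d * e ∣ d := by
      rw [hd_def]
      refine Finset.dvd_gcd ?_
      intro i _
      rw [← hmul i]
      exact mul_dvd_mul_left d (hedvd i)
    have he1 : IsUnit e := by
      refine isUnit_of_dvd_one ?_
      exact (mul_dvd_mul_iff_left hd0).mp (by simpa using h1)
    have : Ideal.span (Set.range c') = ⊤ := by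
      rw [he]
      exact Ideal.span_singleton_eq_top.mpr (by simpa using he1)
    rw [this]; trivial
  rw [Ideal.span, Submodule.mem_span_range_iff_exists_fun] at hspan
  obtain ⟨uu, huu⟩ := hspan
  refine ⟨d, bN.equivFun.symm c', (∑ i, uu i • LinearMap.proj i) ∘ₗ bN.equivFun.toLinearMap,
    hd0, ?_, ?_⟩
  · have h2 : a = bN.equivFun.symm c := (bN.equivFun.symm_apply_apply a).symm
    have h3 : bN.equivFun.symm (d • c') = d • bN.equivFun.symm c' :=
      bN.equivFun.symm.map_smul d c'
    rw [h2, ← h3]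
    congr 1
    funext i
    simp [smul_eq_mul, hmul i]
  · simp only [LinearMap.comp_apply, LinearEquiv.coe_toLinearMap, LinearEquiv.apply_symm_apply,
      LinearMap.sum_apply, LinearMap.smul_apply, LinearMap.proj_apply]
    simpa [smul_eq_mul] using huu

/-- Splitting off a ℤ[-1] factor. -/
lemma split_neg {N : Type*} [AddCommGroup N] [Module ℤ N] (τ : N →ₗ[ℤ] N)
    (f : N →ₗ[ℤ] ℤ) (b : N) (hb : τ b = -b) (hfb : f b = 1)
    (hfτ : ∀ m, f (τ m) = -f m) :
    ∃ (e : N ≃ₗ[ℤ] ℤ × LinearMap.ker f) (τK : LinearMap.ker f →ₗ[ℤ] LinearMap.ker f),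
      (∀ m, (τK m : N) = τ (m : N)) ∧
      (∀ m, e (τ m) = (-(e m).1, τK (e m).2)) := by
  obtain rfl : ‹Module ℤ N› = AddCommGroup.toIntModule N :=
    (AddCommGroup.uniqueIntModule).uniq _
  have hKτ : ∀ x ∈ LinearMap.ker f, τ x ∈ LinearMap.ker f := by
    intro x hx
    rw [LinearMap.mem_ker] at hx ⊢
    rw [hfτ, hx, neg_zero]
  set τK : LinearMap.ker f →ₗ[ℤ] LinearMap.ker f := τ.restrict hKτ with hτK
  have hτKval : ∀ m : LinearMap.ker f, (τK m : N) = τ (m : N) := by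
    intro m; rfl
  have hmem : ∀ m : N, m - f m • b ∈ LinearMap.ker f := by
    intro m
    rw [LinearMap.mem_ker, map_sub, LinearMap.map_smul, hfb, smul_eq_mul, mul_one, sub_self]
  set ρ : N →ₗ[ℤ] LinearMap.ker f :=
    (LinearMap.id - (LinearMap.toSpanSingleton ℤ N b) ∘ₗ f).codRestrict (LinearMap.ker f)
      (by intro m; simpa [LinearMap.toSpanSingleton_apply] using hmem m) with hρ
  have hρval : ∀ m : N, (ρ m : N) = m - f m • b := by
    intro m; rfl
  refine ⟨{ toLinearMap := f.prod ρ
            invFun := fun p => p.1 • b + (p.2 : N)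
            left_inv := ?_
            right_inv := ?_ }, τK, hτKval, ?_⟩
  · intro m
    show f m • b + ((ρ m : N)) = m
    rw [hρval]
    abel
  · rintro ⟨k, m⟩
    have hm : f (m : N) = 0 := LinearMap.mem_ker.mp m.2
    refine Prod.ext ?_ ?_
    · show f (k • b + (m : N)) = k
      rw [map_add, LinearMap.map_smul, hfb, hm, smul_eq_mul, mul_one, add_zero]
    · show ρ (k • b + (m : N)) = m
      refine Subtype.ext ?_
      rw [hρval, map_add, LinearMap.map_smul, hfb, hm, smul_eq_mul, mul_one, add_zero]
      abel
  · intro m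
    refine Prod.ext ?_ ?_
    · show f (τ m) = -f m
      exact hfτ m
    · show ρ (τ m) = τK (ρ m)
      refine Subtype.ext ?_
      rw [hρval, hτKval, hρval, hfτ, map_sub, LinearMap.map_smul, hb]
      simp only [neg_smul, smul_neg, sub_neg_eq_add]

/-- Splitting off a ℤ[τ] factor. -/
lemma split_pair {N : Type*} [AddCommGroup N] [Module ℤ N] (τ : N →ₗ[ℤ] N)
    (hτ : ∀ m, τ (τ m) = m) (f : N →ₗ[ℤ] ℤ) (x' : N) (hfx' : f x' = 1)
    (hfτx' : f (τ x') = 0) :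
    ∃ (e : N ≃ₗ[ℤ] (ℤ × ℤ) × ↥(LinearMap.ker f ⊓ LinearMap.ker (f ∘ₗ τ)))
      (τK : ↥(LinearMap.ker f ⊓ LinearMap.ker (f ∘ₗ τ)) →ₗ[ℤ]
            ↥(LinearMap.ker f ⊓ LinearMap.ker (f ∘ₗ τ))),
      (∀ m, (τK m : N) = τ (m : N)) ∧
      (∀ m, e (τ m) = (Prod.swap (e m).1, τK (e m).2)) := by
  obtain rfl : ‹Module ℤ N› = AddCommGroup.toIntModule N :=
    (AddCommGroup.uniqueIntModule).uniq _
  set K := LinearMap.ker f ⊓ LinearMap.ker (f ∘ₗ τ) with hKdef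
  have hmemK : ∀ m : N, m ∈ K ↔ f m = 0 ∧ f (τ m) = 0 := by
    intro m
    simp [hKdef, LinearMap.mem_ker, Submodule.mem_inf]
  have hKτ : ∀ x ∈ K, τ x ∈ K := by
    intro x hx
    rw [hmemK] at hx ⊢
    exact ⟨hx.2, by rw [hτ]; exact hx.1⟩
  set τK : K →ₗ[ℤ] K := τ.restrict hKτ with hτKdef
  have hτKval : ∀ m : K, (τK m : N) = τ (m : N) := by
    intro m; rfl
  have hfττ : ∀ m, f (τ (τ m)) = f m := by intro m; rw [hτ]
  have hmem : ∀ m : N, m - f m • x' - f (τ m) • τ x' ∈ K := by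
    intro m
    rw [hmemK]
    constructor
    · rw [map_sub, map_sub, LinearMap.map_smul, LinearMap.map_smul, hfx', hfτx']
      simp
    · rw [map_sub, map_sub, LinearMap.map_smul, LinearMap.map_smul, map_sub, map_sub,
        LinearMap.map_smul, LinearMap.map_smul, hfττ]
      simp [hfτx', hfx']
  set ρ : N →ₗ[ℤ] K :=
    (LinearMap.id - (LinearMap.toSpanSingleton ℤ N x') ∘ₗ f
      - (LinearMap.toSpanSingleton ℤ N (τ x')) ∘ₗ (f ∘ₗ τ)).codRestrict K
      (by intro m; simpa [LinearMap.toSpanSingleton_apply] using hmem m) with hρ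
  have hρval : ∀ m : N, (ρ m : N) = m - f m • x' - f (τ m) • τ x' := by
    intro m; rfl
  refine ⟨{ toLinearMap := (f.prod (f ∘ₗ τ)).prod ρ
            invFun := fun p => p.1.1 • x' + p.1.2 • τ x' + (p.2 : N)
            left_inv := ?_
            right_inv := ?_ }, τK, hτKval, ?_⟩
  · intro m
    show f m • x' + f (τ m) • τ x' + ((ρ m : N)) = m
    rw [hρval]
    abel
  · rintro ⟨⟨k, l⟩, m⟩
    have hm1 : f (m : N) = 0 := ((hmemK _).mp m.2).1
    have hm2 : f (τ (m : N)) = 0 := ((hmemK _).mp m.2).2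
    have hv : f (k • x' + l • τ x' + (m : N)) = k := by
      simp [map_add, LinearMap.map_smul, hfx', hfτx', hm1]
    have hvτ : f (τ (k • x' + l • τ x' + (m : N))) = l := by
      simp [map_add, LinearMap.map_smul, hτ, hfx', hfτx', hm2]
    refine Prod.ext (Prod.ext ?_ ?_) ?_
    · exact hv
    · exact hvτ
    · show ρ (k • x' + l • τ x' + (m : N)) = m
      refine Subtype.ext ?_
      rw [hρval, hv, hvτ]
      abel
  · intro m
    refine Prod.ext (Prod.ext ?_ ?_) ?_
    · show f (τ m) = f (τ m)
      rfl
    · show f (τ (τ m)) = f m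
      exact hfττ m
    · show ρ (τ m) = τK (ρ m)
      refine Subtype.ext ?_
      rw [hρval, hτKval, hρval, hfττ, map_sub, map_sub, LinearMap.map_smul,
        LinearMap.map_smul, hτ]
      abel

end ZtauAux

namespace ZtauAux2
open ZtauAux

universe u

lemma lem_id {N : Type u} [AddCommGroup N] [Module ℤ N] [Module.Free ℤ N] [Module.Finite ℤ N]
    (τ : N →ₗ[ℤ] N) (h : ∀ m, τ m = m) :
    ∃ (u v w : ℕ) (φ : N ≃ₗ[ℤ] (Fin u → ℤ) × (Fin v → ℤ) × (Fin w → ℤ × ℤ)),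
      ∀ n : N, φ (τ n) = ((φ n).1, -(φ n).2.1, fun i => ((φ n).2.2 i).swap) := by
  refine ⟨Module.finrank ℤ N, 0, 0, (Module.finBasis ℤ N).equivFun ≪≫ₗ padEquiv _, ?_⟩
  intro m
  rw [h m]
  exact Prod.ext rfl (Prod.ext (Subsingleton.elim _ _) (Subsingleton.elim _ _))

theorem aux : ∀ (n : ℕ) (N : Type u) [AddCommGroup N] [Module ℤ N]
    [Module.Free ℤ N] [Module.Finite ℤ N] (τ : N →ₗ[ℤ] N),
    (∀ m, τ (τ m) = m) → Module.finrank ℤ N ≤ n →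
    ∃ (u v w : ℕ) (φ : N ≃ₗ[ℤ] (Fin u → ℤ) × (Fin v → ℤ) × (Fin w → ℤ × ℤ)),
      ∀ n : N, φ (τ n) = ((φ n).1, -(φ n).2.1, fun i => ((φ n).2.2 i).swap) := by
  intro n
  induction n with
  | zero =>
    intro N _ _ _ _ τ hτ hrk
    haveI : Subsingleton N := by
      rw [← Module.finrank_zero_iff (R := ℤ) (M := N)]
      omega
    exact lem_id τ (fun m => Subsingleton.elim _ _)
  | succ n IH =>
    intro N instAG instM instF instFin τ hτ hrk
    obtain rfl : instM = AddCommGroup.toIntModule N := (AddCommGroup.uniqueIntModule).uniq _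
    by_cases hid : ∀ m, τ m = m
    · exact lem_id τ hid
    push_neg at hid
    obtain ⟨n₀, hn₀⟩ := hid
    set A : Submodule ℤ N := LinearMap.ker (τ - LinearMap.id) with hA
    have hmemA : ∀ m, m ∈ A ↔ τ m = m := by
      intro m
      rw [hA, LinearMap.mem_ker, LinearMap.sub_apply, LinearMap.id_apply, sub_eq_zero]
    haveI hQnz : NoZeroSMulDivisors ℤ (N ⧸ A) := by
      refine ⟨?_⟩
      intro k q hkq
      obtain ⟨m, rfl⟩ := Submodule.Quotient.mk_surjective A q
      by_cases hk : k = 0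
      · exact Or.inl hk
      right
      have h2 : (Submodule.Quotient.mk (k • m) : N ⧸ A) = 0 := by
        rw [Submodule.Quotient.mk_smul]
        exact hkq
      rw [Submodule.Quotient.mk_eq_zero] at h2
      have h3 : τ m = m := by
        have h4 := (hmemA _).mp h2
        rw [LinearMap.map_smul] at h4
        have h5 : k • (τ m - m) = 0 := by rw [smul_sub, h4, sub_self]
        rcases smul_eq_zero.mp h5 with h6 | h6
        · exact absurd h6 hk
        · exact sub_eq_zero.mp h6
      rw [Submodule.Quotient.mk_eq_zero]
      exact (hmemA m).mpr h3
    haveI : Module.Finite ℤ (N ⧸ A) := inferInstance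
    haveI : Module.Free ℤ (N ⧸ A) := Module.free_of_finite_type_torsion_free'
    have hπτ : ∀ m : N, (Submodule.Quotient.mk (τ m) : N ⧸ A) = -(Submodule.Quotient.mk m) := by
      intro m
      rw [show -(Submodule.Quotient.mk m : N ⧸ A) = Submodule.Quotient.mk (-m) by
        rw [Submodule.Quotient.mk_neg]]
      rw [Submodule.Quotient.eq]
      have : τ m - -m = τ m + m := by abel
      rw [this]
      refine (hmemA _).mpr ?_
      rw [map_add, hτ]
      abel
    haveI : IsNoetherian ℤ N := isNoetherian_of_isNoetherianRing_of_finite ℤ N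
    by_cases hcase : ∃ (b : N) (g : (N ⧸ A) →ₗ[ℤ] ℤ), τ b = -b ∧ g (Submodule.Quotient.mk b) = 1
    · -- split off a ℤ[-1]
      obtain ⟨b, g, hb, hgb⟩ := hcase
      set f : N →ₗ[ℤ] ℤ := g ∘ₗ A.mkQ with hf
      have hfb : f b = 1 := by
        rw [hf]; simpa [Submodule.mkQ_apply] using hgb
      have hfτ : ∀ m, f (τ m) = -f m := by
        intro m
        rw [hf]
        simp only [LinearMap.comp_apply, Submodule.mkQ_apply]
        rw [hπτ, map_neg]
      obtain ⟨e, τK, hτKval, hcomm⟩ := split_neg τ f b hb hfb hfτ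
      haveI : Module.Finite ℤ (LinearMap.ker f) := inferInstance
      haveI : Module.Free ℤ (LinearMap.ker f) := Module.free_of_finite_type_torsion_free'
      have hτK2 : ∀ m, τK (τK m) = m := by
        intro m
        apply Subtype.ext
        rw [hτKval, hτKval]
        exact hτ _
      have hrkK : Module.finrank ℤ (LinearMap.ker f) ≤ n := by
        have h1 : Module.finrank ℤ N = Module.finrank ℤ (ℤ × LinearMap.ker f) := e.finrank_eq
        rw [Module.finrank_prod, Module.finrank_self] at h1
        omega
      obtain ⟨u, v, w, φK, hφK⟩ := IH (LinearMap.ker f) τK hτK2 hrkK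
      refine ⟨u, v+1, w,
        e ≪≫ₗ ((LinearEquiv.refl ℤ ℤ).prodCongr φK) ≪≫ₗ consSnd u v w, ?_⟩
      intro m
      simp only [LinearEquiv.trans_apply]
      rw [hcomm m]
      simp only [LinearEquiv.prodCongr_apply, LinearEquiv.refl_apply]
      rw [hφK]
      show consSnd u v w (-(e m).1,
          ((φK (e m).2).1, -(φK (e m).2).2.1, fun i => ((φK (e m).2).2.2 i).swap)) = _
      rw [show consSnd u v w ((e m).1, φK (e m).2) =
        ((φK (e m).2).1, Fin.cons (e m).1 (φK (e m).2).2.1, (φK (e m).2).2.2) from rfl]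
      rw [show consSnd u v w (-(e m).1,
          ((φK (e m).2).1, -(φK (e m).2).2.1, fun i => ((φK (e m).2).2.2 i).swap)) =
        ((φK (e m).2).1, Fin.cons (-(e m).1) (-(φK (e m).2).2.1),
          fun i => ((φK (e m).2).2.2 i).swap) from rfl]
      refine Prod.ext rfl (Prod.ext ?_ rfl)
      exact cons_neg _ _
    · -- split off a ℤ[τ]
      have hQnt : Nontrivial (N ⧸ A) := by
        refine nontrivial_of_ne (Submodule.Quotient.mk n₀) 0 ?_
        rw [Ne, Submodule.Quotient.mk_eq_zero]
        intro hm
        exact hn₀ ((hmemA n₀).mp hm)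
      set bQ := Module.Free.chooseBasis ℤ (N ⧸ A) with hbQ
      obtain ⟨i₀⟩ := bQ.index_nonempty
      set g₀ := bQ.coord i₀ with hg₀
      obtain ⟨x, hx⟩ := Submodule.Quotient.mk_surjective A (bQ i₀)
      have hg₀x : g₀ (Submodule.Quotient.mk x) = 1 := by
        rw [hx, hg₀]
        simp
      set a := x + τ x with ha_def
      have hτa : τ a = a := by
        rw [ha_def, map_add, hτ]
        abel
      have ha : a ≠ 0 := by
        intro h0
        rw [ha_def] at h0
        refine hcase ⟨x, g₀, ?_, hg₀x⟩
        rw [eq_neg_iff_add_eq_zero, add_comm]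
        exact h0
      obtain ⟨d, a₀, h, hd0, hda, hha⟩ := exists_unimodular ha
      have hτa₀ : τ a₀ = a₀ := by
        have h1 : d • τ a₀ = d • a₀ := by
          rw [← LinearMap.map_smul, ← hda, hτa, hda]
        have h2 : d • (τ a₀ - a₀) = 0 := by rw [smul_sub, h1, sub_self]
        rcases smul_eq_zero.mp h2 with h3 | h3
        · exact absurd h3 hd0
        · exact sub_eq_zero.mp h3
      have ha₀A : a₀ ∈ A := (hmemA a₀).mpr hτa₀
      have hg₀a₀ : (Submodule.Quotient.mk a₀ : N ⧸ A) = 0 :=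
        (Submodule.Quotient.mk_eq_zero _).mpr ha₀A
      have hτx : τ x = a - x := by rw [ha_def]; abel
      have hdodd : ¬ (2 ∣ d) := by
        rintro ⟨t', rfl⟩
        refine hcase ⟨x - t' • a₀, g₀, ?_, ?_⟩
        · rw [map_sub, LinearMap.map_smul, hτa₀, hτx, hda]
          show (2 * t') • a₀ - x - t' • a₀ = -(x - t' • a₀)
          rw [two_mul, add_smul]
          abel
        · rw [Submodule.Quotient.mk_sub, Submodule.Quotient.mk_smul, map_sub, map_smul,
            hg₀a₀, hg₀x]
          simp
      obtain ⟨t, ht⟩ : ∃ t, d = 2 * t + 1 := by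
        rcases Int.even_or_odd d with he | ho
        · rcases he with ⟨r, hr⟩
          exact absurd ⟨r, by omega⟩ hdodd
        · exact ho
      set x' := x - t • a₀ with hx'def
      have hτx' : τ x' = a₀ + t • a₀ - x := by
        rw [hx'def, map_sub, LinearMap.map_smul, hτa₀, hτx, hda, ht]
        show (2 * t + 1) • a₀ - x - t • a₀ = a₀ + t • a₀ - x
        rw [add_smul, two_mul, add_smul, one_smul]
        abel
      have hsum : x' + τ x' = a₀ := by
        rw [hx'def, hτx']
        abel
      set g₁ : N →ₗ[ℤ] ℤ := g₀ ∘ₗ A.mkQ with hg₁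
      have hg₁x' : g₁ x' = 1 := by
        rw [hg₁]
        simp only [LinearMap.comp_apply, Submodule.mkQ_apply, hx'def]
        rw [Submodule.Quotient.mk_sub, Submodule.Quotient.mk_smul, map_sub, map_smul,
          hg₀a₀, hg₀x]
        simp
      have hg₁a₀ : g₁ a₀ = 0 := by
        rw [hg₁]
        simp only [LinearMap.comp_apply, Submodule.mkQ_apply, hg₀a₀, map_zero]
      set f : N →ₗ[ℤ] ℤ := (1 - h x') • g₁ + h with hfdef
      have hfx' : f x' = 1 := by
        rw [hfdef]
        simp only [LinearMap.add_apply, LinearMap.smul_apply, hg₁x', smul_eq_mul]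
        ring
      have hfa₀ : f a₀ = 1 := by
        rw [hfdef]
        simp only [LinearMap.add_apply, LinearMap.smul_apply, hg₁a₀, hha, smul_eq_mul]
        ring
      have hfτx' : f (τ x') = 0 := by
        have hh : τ x' = a₀ - x' := by rw [← hsum]; abel
        rw [hh, map_sub, hfa₀, hfx', sub_self]
      obtain ⟨e, τK, hτKval, hcomm⟩ := split_pair τ hτ f x' hfx' hfτx'
      haveI : Module.Finite ℤ ↥(LinearMap.ker f ⊓ LinearMap.ker (f ∘ₗ τ)) := inferInstance
      haveI : Module.Free ℤ ↥(LinearMap.ker f ⊓ LinearMap.ker (f ∘ₗ τ)) :=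
        Module.free_of_finite_type_torsion_free'
      have hτK2 : ∀ m, τK (τK m) = m := by
        intro m
        apply Subtype.ext
        rw [hτKval, hτKval]
        exact hτ _
      have hrkK : Module.finrank ℤ ↥(LinearMap.ker f ⊓ LinearMap.ker (f ∘ₗ τ)) ≤ n := by
        have h1 : Module.finrank ℤ N =
            Module.finrank ℤ ((ℤ × ℤ) × ↥(LinearMap.ker f ⊓ LinearMap.ker (f ∘ₗ τ))) :=
          e.finrank_eq
        rw [Module.finrank_prod, Module.finrank_prod, Module.finrank_self] at h1
        omega
      obtain ⟨u, v, w, φK, hφK⟩ := IH _ τK hτK2 hrkK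
      refine ⟨u, v, w+1,
        e ≪≫ₗ ((LinearEquiv.refl ℤ (ℤ × ℤ)).prodCongr φK) ≪≫ₗ consTrd u v w, ?_⟩
      intro m
      simp only [LinearEquiv.trans_apply]
      rw [hcomm m]
      simp only [LinearEquiv.prodCongr_apply, LinearEquiv.refl_apply]
      rw [hφK]
      rw [show consTrd u v w ((e m).1, φK (e m).2) =
        ((φK (e m).2).1, (φK (e m).2).2.1, Fin.cons (e m).1 (φK (e m).2).2.2) from rfl]
      rw [show consTrd u v w (Prod.swap (e m).1,
          ((φK (e m).2).1, -(φK (e m).2).2.1, fun i => ((φK (e m).2).2.2 i).swap)) =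
        ((φK (e m).2).1, -(φK (e m).2).2.1,
          Fin.cons (Prod.swap (e m).1) (fun i => ((φK (e m).2).2.2 i).swap)) from rfl]
      refine Prod.ext rfl (Prod.ext rfl ?_)
      exact cons_swap _ _

end ZtauAux2

/-- **Structure of ℤ[τ]-lattices.** Every finitely generated free abelian group with a
ℤ-linear involution decomposes as a direct sum of copies of the elementary
ℤ[τ]-lattices ℤ[1] (τ = id), ℤ[−1] (τ = −id) and ℤ[τ] (ℤ² with the coordinate swap). -/
theorem stmt_0 (N : Type*) [AddCommGroup N] [Module ℤ N]
    [Module.Free ℤ N] [Module.Finite ℤ N]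
    (τ : N →ₗ[ℤ] N) (hτ : ∀ n, τ (τ n) = n) :
    ∃ (u v w : ℕ) (φ : N ≃ₗ[ℤ] (Fin u → ℤ) × (Fin v → ℤ) × (Fin w → ℤ × ℤ)),
      ∀ n : N,
        φ (τ n) = ((φ n).1, -(φ n).2.1, fun i => ((φ n).2.2 i).swap) := by
  exact ZtauAux2.aux (Module.finrank ℤ N) N τ hτ le_rfl
end

section
/- Let (N, τ) be a ℤ[τ]-lattice and suppose that N is isomorphic, as a ℤ[τ]-lattice, to ℤ[1]^u ⊕ ℤ[−1]^v ⊕ ℤ[τ]^w. Then ker(1−τ) ∩ ker(1+τ) = 0, 2N ⊆ ker(1−τ) + ker(1+τ) (so that N/(ker(1−τ)+ker(1+τ)) is a finite F₂-vector space), and w = dim_{F₂} N/(ker(1−τ) + ker(1+τ)), u = rank ker(1−τ) − w, v = rank ker(1+τ) − w. In particular the triple (u, v, w) is uniquely determined by (N, τ). -/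
/-- **Uniqueness of the type of a ℤ[τ]-lattice.** If `(N, τ)` is isomorphic, as a
ℤ[τ]-lattice, to `ℤ[1]^u ⊕ ℤ[−1]^v ⊕ ℤ[τ]^w`, then `ker(1−τ) ∩ ker(1+τ) = 0`,
`2N ⊆ ker(1−τ) + ker(1+τ)`, the quotient `N/(ker(1−τ)+ker(1+τ))` has cardinality `2^w`
(so `w = dim_{F₂}` of the quotient), and `rank ker(1−τ) = u + w`, `rank ker(1+τ) = v + w`;
in particular `(u, v, w)` is uniquely determined by `(N, τ)`. -/
theorem stmt_1 (N : Type*) [AddCommGroup N] [Module ℤ N]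
    [Module.Free ℤ N] [Module.Finite ℤ N]
    (τ : N →ₗ[ℤ] N) (hτ : ∀ n, τ (τ n) = n)
    (u v w : ℕ) (φ : N ≃ₗ[ℤ] (Fin u → ℤ) × (Fin v → ℤ) × (Fin w → ℤ × ℤ))
    (hφ : ∀ n : N, φ (τ n) = ((φ n).1, -(φ n).2.1, fun i => ((φ n).2.2 i).swap)) :
    LinearMap.ker (1 - τ : Module.End ℤ N) ⊓ LinearMap.ker (1 + τ : Module.End ℤ N) = ⊥ ∧
    (∀ n : N, (2 : ℤ) • n ∈
      LinearMap.ker (1 - τ : Module.End ℤ N) ⊔ LinearMap.ker (1 + τ : Module.End ℤ N)) ∧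
    Nat.card (N ⧸ (LinearMap.ker (1 - τ : Module.End ℤ N) ⊔
      LinearMap.ker (1 + τ : Module.End ℤ N))) = 2 ^ w ∧
    Module.finrank ℤ (LinearMap.ker (1 - τ : Module.End ℤ N)) = u + w ∧
    Module.finrank ℤ (LinearMap.ker (1 + τ : Module.End ℤ N)) = v + w := by
  have hker1 : ∀ n : N, n ∈ LinearMap.ker (1 - τ : Module.End ℤ N) ↔ τ n = n := by
    intro n
    rw [LinearMap.mem_ker, LinearMap.sub_apply, Module.End.one_apply, sub_eq_zero, eq_comm]
  have hker2 : ∀ n : N, n ∈ LinearMap.ker (1 + τ : Module.End ℤ N) ↔ τ n = -n := by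
    intro n
    rw [LinearMap.mem_ker, LinearMap.add_apply, Module.End.one_apply]
    constructor
    · intro h
      have h' : τ n + n = 0 := by rw [add_comm]; exact h
      exact eq_neg_of_add_eq_zero_left h'
    · intro h; rw [h]; abel
  refine ⟨?_, ?_, ?_, ?_, ?_⟩
  · -- intersection trivial
    rw [eq_bot_iff]
    intro n hn
    obtain ⟨h1, h2⟩ := Submodule.mem_inf.mp hn
    rw [hker1] at h1
    rw [hker2] at h2
    have hnn : n + n = 0 := by nth_rewrite 2 [h1.symm.trans h2]; abel
    have h3 : φ n + φ n = 0 := by rw [← map_add, hnn, map_zero]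
    have h4 : (2 : ℤ) • φ n = 0 := by rw [two_smul]; exact h3
    have h5 : φ n = 0 := by
      rcases smul_eq_zero.mp h4 with h | h
      · exact absurd h (by norm_num)
      · exact h
    have h6 : n = 0 := by
      apply φ.injective; rw [h5, map_zero]
    simpa using h6
  · -- 2N ⊆ sum
    intro n
    rw [Submodule.mem_sup]
    refine ⟨n + τ n, (hker1 _).mpr ?_, n - τ n, (hker2 _).mpr ?_, ?_⟩
    · rw [map_add, hτ]; abel
    · rw [map_sub, hτ]; abel
    · rw [two_zsmul]; abel
  · -- cardinality of quotient
    let f : N →ₗ[ℤ] (Fin w → ZMod 2) :=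
      { toFun := fun n i => ((((φ n).2.2 i).1 + ((φ n).2.2 i).2 : ℤ) : ZMod 2)
        map_add' := by intro a b; funext i; simp; try push_cast; try ring
        map_smul' := by intro c a; funext i; simp [smul_eq_mul]; try push_cast; try ring }
    have hf : ∀ n i, f n i = ((((φ n).2.2 i).1 + ((φ n).2.2 i).2 : ℤ) : ZMod 2) := fun _ _ => rfl
    have hsurj : Function.Surjective f := by
      intro e
      refine ⟨φ.symm (0, 0, fun i => ((e i).val, 0)), ?_⟩
      funext i
      rw [hf]
      simp
    have hker : LinearMap.ker f =
        LinearMap.ker (1 - τ : Module.End ℤ N) ⊔ LinearMap.ker (1 + τ : Module.End ℤ N) := by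
      apply le_antisymm
      · intro n hn
        rw [LinearMap.mem_ker] at hn
        have hm : ∀ i, ∃ m : ℤ, ((φ n).2.2 i).1 + ((φ n).2.2 i).2 = 2 * m := by
          intro i
          have h0 : f n i = 0 := (congrFun hn i).trans rfl
          rw [hf] at h0
          exact (ZMod.intCast_zmod_eq_zero_iff_dvd _ 2).mp h0
        choose m hm using hm
        set y : N := φ.symm ((φ n).1, 0, fun i => (m i, m i)) with hy
        set z : N := φ.symm (0, (φ n).2.1,
          fun i => (((φ n).2.2 i).1 - m i, ((φ n).2.2 i).2 - m i)) with hz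
        rw [Submodule.mem_sup]
        refine ⟨y, (hker1 _).mpr ?_, z, (hker2 _).mpr ?_, ?_⟩
        · apply φ.injective
          rw [hφ y, hy, LinearEquiv.apply_symm_apply]
          simp [Prod.swap]
        · apply φ.injective
          rw [hφ z, map_neg, hz, LinearEquiv.apply_symm_apply]
          refine Prod.ext (by simp) (Prod.ext (by simp) ?_)
          funext i
          have h9 := hm i
          simp only [Prod.swap, Prod.neg_mk, Pi.neg_apply, Prod.mk.injEq]
          constructor <;> omega
        · apply φ.injective
          rw [map_add, hy, hz, LinearEquiv.apply_symm_apply, LinearEquiv.apply_symm_apply]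
          refine Prod.ext (by simp) (Prod.ext (by simp) ?_)
          funext i
          simp only [Prod.fst_add, Prod.snd_add, Pi.add_apply, Prod.mk_add_mk]
          exact Prod.ext (by ring) (by ring)
      · rw [sup_le_iff]
        constructor
        · intro n hn
          rw [hker1] at hn
          rw [LinearMap.mem_ker]
          funext i
          have h1 : φ (τ n) = φ n := by rw [hn]
          rw [hφ n] at h1
          have h2 : ((φ n).2.2 i).swap = (φ n).2.2 i := congrFun (congrArg (·.2.2) h1) i
          have h3 : ((φ n).2.2 i).2 = ((φ n).2.2 i).1 := congrArg Prod.fst h2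
          show ((((φ n).2.2 i).1 + ((φ n).2.2 i).2 : ℤ) : ZMod 2) = 0
          rw [h3, ← two_mul]
          exact (ZMod.intCast_zmod_eq_zero_iff_dvd _ 2).mpr ⟨_, rfl⟩
        · intro n hn
          rw [hker2] at hn
          rw [LinearMap.mem_ker]
          funext i
          have h1 : φ (τ n) = -φ n := by rw [hn, map_neg]
          rw [hφ n] at h1
          have h2 : ((φ n).2.2 i).swap = -((φ n).2.2 i) := congrFun (congrArg (·.2.2) h1) i
          have h3 : ((φ n).2.2 i).2 = -((φ n).2.2 i).1 := congrArg Prod.fst h2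
          show ((((φ n).2.2 i).1 + ((φ n).2.2 i).2 : ℤ) : ZMod 2) = 0
          rw [h3]
          simp
    have e := f.quotKerEquivOfSurjective hsurj
    rw [← hker]
    refine (Nat.card_congr (Equiv.ofBijective _ (EquivLike.bijective e))).trans ?_
    simp [Nat.card_eq_fintype_card]
  · -- rank of ker (1 - τ)
    let g : ((Fin u → ℤ) × (Fin w → ℤ)) →ₗ[ℤ] N :=
      φ.symm.toLinearMap ∘ₗ
      { toFun := fun pq => (pq.1, 0, fun i => (pq.2 i, pq.2 i))
        map_add' := by intro a b; exact Prod.ext rfl (Prod.ext (by simp) rfl)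
        map_smul' := by intro c a; exact Prod.ext rfl (Prod.ext (by simp) rfl) }
    have hg : ∀ pq, g pq = φ.symm (pq.1, 0, fun i => (pq.2 i, pq.2 i)) := fun _ => rfl
    have hinj : Function.Injective g := by
      intro x y h
      rw [hg, hg] at h
      have h' := φ.symm.injective h
      have h1 : x.1 = y.1 := congrArg (fun z => z.1) h'
      have h2 : x.2 = y.2 := funext fun i => congrArg (fun z => (z.2.2 i).1) h'
      exact Prod.ext h1 h2
    have hrange : LinearMap.range g = LinearMap.ker (1 - τ : Module.End ℤ N) := by
      ext n
      rw [LinearMap.mem_range, hker1]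
      constructor
      · rintro ⟨pq, rfl⟩
        apply φ.injective
        rw [hφ, hg, LinearEquiv.apply_symm_apply]
        simp [Prod.swap]
      · intro h
        have h1 : φ (τ n) = φ n := by rw [h]
        rw [hφ n] at h1
        have h21 : (φ n).2.1 = 0 := by
          have h5 := congrArg (·.2.1) h1
          simp only at h5
          funext j
          have h6 := congrFun h5 j
          simp only [Pi.neg_apply] at h6
          simp only [Pi.zero_apply]
          omega
        have h22 : ∀ i, ((φ n).2.2 i).2 = ((φ n).2.2 i).1 :=
          fun i => congrArg Prod.fst (congrFun (congrArg (·.2.2) h1) i)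
        refine ⟨((φ n).1, fun i => ((φ n).2.2 i).1), ?_⟩
        rw [hg, LinearEquiv.symm_apply_eq]
        refine Prod.ext rfl (Prod.ext h21.symm ?_)
        funext i
        exact Prod.ext rfl (h22 i).symm
    have e := (LinearEquiv.ofInjective g hinj).trans (LinearEquiv.ofEq _ _ hrange)
    have h := @LinearEquiv.finrank_eq ℤ _ _ _ _ _ _
      ((LinearMap.ker (1 - τ : Module.End ℤ N)).module) e
    rw [Module.finrank_prod, Module.finrank_pi, Module.finrank_pi] at h
    simp only [Fintype.card_fin] at h
    have hmod : (AddCommGroup.toIntModule ↥(LinearMap.ker (1 - τ : Module.End ℤ N)))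
        = (LinearMap.ker (1 - τ : Module.End ℤ N)).module :=
      @Subsingleton.elim _ (@Unique.instSubsingleton _ AddCommGroup.uniqueIntModule) _ _
    rw [hmod]
    exact h.symm
  · -- rank of ker (1 + τ)
    let g : ((Fin v → ℤ) × (Fin w → ℤ)) →ₗ[ℤ] N :=
      φ.symm.toLinearMap ∘ₗ
      { toFun := fun pq => (0, pq.1, fun i => (pq.2 i, -pq.2 i))
        map_add' := by
          intro a b
          refine Prod.ext (by simp) (Prod.ext rfl ?_)
          funext i
          exact Prod.ext rfl (by simp [neg_add, add_comm])
        map_smul' := by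
          intro c a
          refine Prod.ext (by simp) (Prod.ext rfl ?_)
          funext i
          exact Prod.ext rfl (by simp) }
    have hg : ∀ pq, g pq = φ.symm (0, pq.1, fun i => (pq.2 i, -pq.2 i)) := fun _ => rfl
    have hinj : Function.Injective g := by
      intro x y h
      rw [hg, hg] at h
      have h' := φ.symm.injective h
      have h1 : x.1 = y.1 := congrArg (fun z => z.2.1) h'
      have h2 : x.2 = y.2 := funext fun i => congrArg (fun z => (z.2.2 i).1) h'
      exact Prod.ext h1 h2
    have hrange : LinearMap.range g = LinearMap.ker (1 + τ : Module.End ℤ N) := by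
      ext n
      rw [LinearMap.mem_range, hker2]
      constructor
      · rintro ⟨pq, rfl⟩
        apply φ.injective
        rw [hφ, map_neg, hg, LinearEquiv.apply_symm_apply]
        refine Prod.ext (by simp) (Prod.ext (by simp) ?_)
        funext i
        simp [Prod.swap]
      · intro h
        have h1 : φ (τ n) = -φ n := by rw [h, map_neg]
        rw [hφ n] at h1
        have h11 : (φ n).1 = 0 := by
          have h5 := congrArg Prod.fst h1
          simp only [Prod.fst_neg] at h5
          funext j
          have h6 := congrFun h5 j
          simp only [Pi.neg_apply] at h6
          simp only [Pi.zero_apply]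
          omega
        have h22 : ∀ i, ((φ n).2.2 i).2 = -((φ n).2.2 i).1 :=
          fun i => congrArg Prod.fst (congrFun (congrArg (·.2.2) h1) i)
        refine ⟨((φ n).2.1, fun i => ((φ n).2.2 i).1), ?_⟩
        rw [hg, LinearEquiv.symm_apply_eq]
        refine Prod.ext h11.symm (Prod.ext rfl ?_)
        funext i
        exact Prod.ext rfl (h22 i).symm
    have e := (LinearEquiv.ofInjective g hinj).trans (LinearEquiv.ofEq _ _ hrange)
    have h := @LinearEquiv.finrank_eq ℤ _ _ _ _ _ _
      ((LinearMap.ker (1 + τ : Module.End ℤ N)).module) e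
    rw [Module.finrank_prod, Module.finrank_pi, Module.finrank_pi] at h
    simp only [Fintype.card_fin] at h
    have hmod : (AddCommGroup.toIntModule ↥(LinearMap.ker (1 + τ : Module.End ℤ N)))
        = (LinearMap.ker (1 + τ : Module.End ℤ N)).module :=
      @Subsingleton.elim _ (@Unique.instSubsingleton _ AddCommGroup.uniqueIntModule) _ _
    rw [hmod]
    exact h.symm
end

section
/- Let A be an n×n integer matrix with A² = I, and let σ_A be the induced involution of (ℂˣ)^n. Set p = rank ker(I−A) (kernel taken in ℤ^n), q = rank ker(I+A), and r = dim_{F₂} ℤ^n/(ker(I−A) + ker(I+A)). Then the fixed subgroup {z ∈ (ℂˣ)^n : σ_A(z) = z} is isomorphic, as a topological group, to (ℝˣ)^{p−r} × (S¹)^{q−r} × (ℂˣ)^r, where S¹ = {z ∈ ℂ : |z| = 1}. -/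
set_option linter.unusedSectionVars false
set_option maxHeartbeats 1600000


/-- The monoid homomorphism `(ℂˣ)^m → (ℂˣ)^n` attached to an integer matrix `B`,
`z ↦ (∏ i, z i ^ B j i)_j`. -/
noncomputable def matZPow {m n : ℕ} (B : Matrix (Fin n) (Fin m) ℤ) :
    (Fin m → ℂˣ) →* (Fin n → ℂˣ) where
  toFun z j := ∏ i, z i ^ B j i
  map_one' := by funext j; simp
  map_mul' x y := by
    funext j
    simp [mul_zpow, Finset.prod_mul_distrib]

/-- The involution `σ_A` of `(ℂˣ)^n` attached to an integer matrix `A` with `A² = I`: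
`σ_A(z)_j = ∏ i, conj (z i) ^ A j i`. -/
noncomputable def sigmaMat {n : ℕ} (A : Matrix (Fin n) (Fin n) ℤ) :
    (Fin n → ℂˣ) →* (Fin n → ℂˣ) :=
  (matZPow A).comp (MonoidHom.compLeft (Units.map (starRingEnd ℂ).toMonoidHom) (Fin n))

/-- The subgroup of fixed points of an endomorphism of a group. -/
def fixedSubgroup {G : Type*} [Group G] (σ : G →* G) : Subgroup G where
  carrier := {z | σ z = z}
  one_mem' := map_one σ
  mul_mem' := by
    intro a b ha hb
    simp only [Set.mem_setOf_eq, map_mul] at *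
    rw [ha, hb]
  inv_mem' := by
    intro a ha
    simp only [Set.mem_setOf_eq, map_inv] at *
    rw [ha]


/-! ### generalized torus machinery -/

noncomputable section Torus

def uconj : ℂˣ →* ℂˣ := Units.map (starRingEnd ℂ).toMonoidHom

@[simp] lemma uconj_val (u : ℂˣ) : (uconj u : ℂ) = (starRingEnd ℂ) u := rfl

@[simp] lemma uconj_uconj (u : ℂˣ) : uconj (uconj u) = u := by
  ext; simp

lemma continuous_uconj : Continuous uconj := by
  rw [Units.continuous_iff]
  constructor
  · exact Complex.continuous_conj.comp Units.continuous_val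
  · have : (fun u : ℂˣ => (((uconj u)⁻¹ : ℂˣ) : ℂ)) = fun u => (starRingEnd ℂ) ((u⁻¹ : ℂˣ) : ℂ) := rfl
    rw [this]
    exact Complex.continuous_conj.comp (Units.continuous_val.comp continuous_inv)

variable {ι κ l : Type*} [Fintype ι] [Fintype κ] [Fintype l]

def cconj : (ι → ℂˣ) →* (ι → ℂˣ) := MonoidHom.compLeft uconj ι

@[simp] lemma cconj_apply (z : ι → ℂˣ) (i : ι) : cconj z i = uconj (z i) := rfl

lemma continuous_cconj : Continuous (cconj (ι := ι)) :=
  continuous_pi fun i => continuous_uconj.comp (continuous_apply i)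

def gPow (B : Matrix κ ι ℤ) : (ι → ℂˣ) →* (κ → ℂˣ) where
  toFun z j := ∏ i, z i ^ B j i
  map_one' := by funext j; simp
  map_mul' x y := by
    funext j
    simp [mul_zpow, Finset.prod_mul_distrib]

lemma gPow_apply (B : Matrix κ ι ℤ) (z : ι → ℂˣ) (j : κ) :
    gPow B z j = ∏ i, z i ^ B j i := rfl

lemma matZPow_eq_gPow {m n : ℕ} (B : Matrix (Fin n) (Fin m) ℤ) : matZPow B = gPow B := rfl

lemma continuous_gPow (B : Matrix κ ι ℤ) : Continuous (gPow B) :=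
  continuous_pi fun j => continuous_finset_prod _ fun i _ =>
    ((continuous_apply i).zpow (B j i))

lemma zpow_finset_sum {G : Type*} [CommGroup G] (z : G) {α : Type*} (s : Finset α) (m : α → ℤ) :
    z ^ (∑ i ∈ s, m i) = ∏ i ∈ s, z ^ m i := by
  induction s using Finset.cons_induction with
  | empty => simp
  | cons a s ha ih => rw [Finset.sum_cons, Finset.prod_cons, zpow_add, ih]

lemma gPow_gPow (B : Matrix κ ι ℤ) (C : Matrix l κ ℤ) (z : ι → ℂˣ) :
    gPow C (gPow B z) = gPow (C * B) z := by
  funext k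
  simp only [gPow_apply, Matrix.mul_apply]
  calc (∏ j, (∏ i, z i ^ B j i) ^ C k j)
      = ∏ j, ∏ i, (z i ^ B j i) ^ C k j := by
        refine Finset.prod_congr rfl fun j _ => ?_
        rw [← Finset.prod_zpow]
    _ = ∏ i, ∏ j, (z i ^ B j i) ^ C k j := Finset.prod_comm
    _ = ∏ i, z i ^ (∑ j, C k j * B j i) := by
        refine Finset.prod_congr rfl fun i _ => ?_
        rw [zpow_finset_sum]
        refine Finset.prod_congr rfl fun j _ => ?_
        rw [← zpow_mul, mul_comm]

lemma gPow_one [DecidableEq ι] (z : ι → ℂˣ) : gPow (1 : Matrix ι ι ℤ) z = z := by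
  funext j
  simp [gPow_apply, Matrix.one_apply]

lemma gPow_cconj (B : Matrix κ ι ℤ) (z : ι → ℂˣ) :
    gPow B (cconj z) = cconj (gPow B z) := by
  funext j
  simp [gPow_apply, map_prod, map_zpow]

def sigmaGen (B : Matrix ι ι ℤ) : (ι → ℂˣ) →* (ι → ℂˣ) := (gPow B).comp cconj

lemma sigmaMat_eq {n : ℕ} (A : Matrix (Fin n) (Fin n) ℤ) : sigmaMat A = sigmaGen A := rfl

lemma sigmaGen_apply (B : Matrix ι ι ℤ) (z : ι → ℂˣ) : sigmaGen B z = gPow B (cconj z) := rfl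

/-- transport of fixed subgroups along an intertwining isomorphism -/
def fixedCongr {G₁ G₂ : Type*} [Group G₁] [Group G₂] {σ₁ : G₁ →* G₁} {σ₂ : G₂ →* G₂}
    (Θ : G₁ ≃* G₂) (h : ∀ z, Θ (σ₁ z) = σ₂ (Θ z)) :
    fixedSubgroup σ₁ ≃* fixedSubgroup σ₂ where
  toFun z := ⟨Θ z.1, by
    have hz : σ₁ z.1 = z.1 := z.2
    show σ₂ (Θ z.1) = Θ z.1
    rw [← h, hz]⟩
  invFun w := ⟨Θ.symm w.1, by
    have hw : σ₂ w.1 = w.1 := w.2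
    show σ₁ (Θ.symm w.1) = Θ.symm w.1
    apply Θ.injective
    rw [h, Θ.apply_symm_apply, hw]⟩
  left_inv z := Subtype.ext (Θ.symm_apply_apply z.1)
  right_inv w := Subtype.ext (Θ.apply_symm_apply w.1)
  map_mul' z w := Subtype.ext (map_mul Θ z.1 w.1)

end Torus

/-! ### the model involution and its fixed subgroup -/

noncomputable section Model

abbrev BIdx (a b c : ℕ) := (Fin a ⊕ Fin b) ⊕ (Fin c ⊕ Fin c)

def bPerm {a b c : ℕ} : BIdx a b c → BIdx a b c := Sum.map id Sum.swap

def bSgn {a b c : ℕ} : BIdx a b c → ℤ :=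
  Sum.elim (Sum.elim (fun _ => 1) (fun _ => -1)) (fun _ => 1)

lemma bPerm_invol {a b c : ℕ} (j : BIdx a b c) : bPerm (bPerm j) = j := by
  rcases j with (j | j) | (j | j) <;> rfl

lemma bSgn_bPerm {a b c : ℕ} (j : BIdx a b c) : bSgn (bPerm j) = bSgn j := by
  rcases j with (j | j) | (j | j) <;> rfl

@[simp] lemma bPerm_aa {a b c : ℕ} (i : Fin a) : bPerm (.inl (.inl i) : BIdx a b c) = .inl (.inl i) := rfl
@[simp] lemma bPerm_bb {a b c : ℕ} (i : Fin b) : bPerm (.inl (.inr i) : BIdx a b c) = .inl (.inr i) := rfl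
@[simp] lemma bPerm_cl {a b c : ℕ} (i : Fin c) : bPerm (.inr (.inl i) : BIdx a b c) = .inr (.inr i) := rfl
@[simp] lemma bPerm_cr {a b c : ℕ} (i : Fin c) : bPerm (.inr (.inr i) : BIdx a b c) = .inr (.inl i) := rfl
@[simp] lemma bSgn_aa {a b c : ℕ} (i : Fin a) : bSgn (.inl (.inl i) : BIdx a b c) = 1 := rfl
@[simp] lemma bSgn_bb {a b c : ℕ} (i : Fin b) : bSgn (.inl (.inr i) : BIdx a b c) = -1 := rfl
@[simp] lemma bSgn_cl {a b c : ℕ} (i : Fin c) : bSgn (.inr (.inl i) : BIdx a b c) = 1 := rfl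
@[simp] lemma bSgn_cr {a b c : ℕ} (i : Fin c) : bSgn (.inr (.inr i) : BIdx a b c) = 1 := rfl

def Dmat (a b c : ℕ) : Matrix (BIdx a b c) (BIdx a b c) ℤ :=
  fun j k => if k = bPerm j then bSgn j else 0

lemma gPow_Dmat {a b c : ℕ} (z : BIdx a b c → ℂˣ) (j : BIdx a b c) :
    gPow (Dmat a b c) z j = z (bPerm j) ^ bSgn j := by
  rw [gPow_apply, Finset.prod_eq_single (bPerm j)]
  · rw [Dmat, if_pos rfl]
  · intro k _ hk
    rw [Dmat, if_neg hk, zpow_zero]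
  · intro h; exact absurd (Finset.mem_univ _) h

lemma sigmaGen_Dmat {a b c : ℕ} (z : BIdx a b c → ℂˣ) (j : BIdx a b c) :
    sigmaGen (Dmat a b c) z j = uconj (z (bPerm j)) ^ bSgn j := by
  rw [sigmaGen_apply, gPow_Dmat]; rfl

lemma mem_fixed_Dmat {a b c : ℕ} (z : BIdx a b c → ℂˣ) :
    z ∈ fixedSubgroup (sigmaGen (Dmat a b c)) ↔
      ∀ j, uconj (z (bPerm j)) ^ bSgn j = z j := by
  constructor
  · intro h j
    rw [← sigmaGen_Dmat]
    exact congrFun h j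
  · intro h
    funext j
    rw [sigmaGen_Dmat]
    exact h j

lemma conj_val_inv (u : ℂˣ) (h : (starRingEnd ℂ) (u : ℂ) = u) :
    (starRingEnd ℂ) ((u⁻¹ : ℂˣ) : ℂ) = ((u⁻¹ : ℂˣ) : ℂ) := by
  rw [Units.val_inv_eq_inv_val, map_inv₀, h]

/-- real unit from a conjugation-fixed complex unit -/
def realOf (u : ℂˣ) (h : (starRingEnd ℂ) (u : ℂ) = u) : ℝˣ where
  val := (u : ℂ).re
  inv := ((u⁻¹ : ℂˣ) : ℂ).re
  val_inv := by
    have h1 : ((u : ℂ).re : ℂ) = (u : ℂ) := Complex.conj_eq_iff_re.1 h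
    have h2 : (((u⁻¹ : ℂˣ) : ℂ).re : ℂ) = ((u⁻¹ : ℂˣ) : ℂ) :=
      Complex.conj_eq_iff_re.1 (conj_val_inv u h)
    have key : (((u : ℂ).re * ((u⁻¹ : ℂˣ) : ℂ).re : ℝ) : ℂ) = 1 := by
      rw [Complex.ofReal_mul, h1, h2, Units.mul_inv]
    exact_mod_cast key
  inv_val := by
    have h1 : ((u : ℂ).re : ℂ) = (u : ℂ) := Complex.conj_eq_iff_re.1 h
    have h2 : (((u⁻¹ : ℂˣ) : ℂ).re : ℂ) = ((u⁻¹ : ℂˣ) : ℂ) :=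
      Complex.conj_eq_iff_re.1 (conj_val_inv u h)
    have key : ((((u⁻¹ : ℂˣ) : ℂ).re * (u : ℂ).re : ℝ) : ℂ) = 1 := by
      rw [Complex.ofReal_mul, h1, h2, Units.inv_mul]
    exact_mod_cast key

@[simp] lemma realOf_val_c (u : ℂˣ) (h) : ((realOf u h : ℝ) : ℂ) = (u : ℂ) :=
  Complex.conj_eq_iff_re.1 h

@[simp] lemma realOf_inv_c (u : ℂˣ) (h) : ((((realOf u h)⁻¹ : ℝˣ) : ℝ) : ℂ) = ((u⁻¹ : ℂˣ) : ℂ) :=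
  Complex.conj_eq_iff_re.1 (conj_val_inv u h)

/-- circle element from a unit `u` with `conj u = u⁻¹` -/
def circOf (u : ℂˣ) (h : uconj u = u⁻¹) : Circle where
  val := u
  property := by
    show (u : ℂ) ∈ Metric.sphere (0 : ℂ) 1
    rw [mem_sphere_zero_iff_norm]
    have hu : u * uconj u = 1 := by rw [h, mul_inv_cancel]
    have h1 : (u : ℂ) * (starRingEnd ℂ) (u : ℂ) = 1 := congrArg Units.val hu
    have h2 : Complex.normSq (u : ℂ) = 1 := by
      have hc := Complex.mul_conj (u : ℂ)
      rw [h1] at hc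
      exact_mod_cast hc.symm
    have h3 : ‖(u : ℂ)‖ ^ 2 = 1 := by rw [Complex.sq_norm]; exact h2
    have h4 : ‖(u : ℂ)‖ = 1 := by nlinarith [norm_nonneg (u : ℂ)]
    rw [h4]

@[simp] lemma circOf_val (u : ℂˣ) (h) : (circOf u h : ℂ) = (u : ℂ) := rfl

def rHom : ℝˣ →* ℂˣ := Units.map Complex.ofRealHom.toMonoidHom

@[simp] lemma rHom_val (x : ℝˣ) : (rHom x : ℂ) = ((x : ℝ) : ℂ) := rfl

lemma continuous_rHom : Continuous rHom := by
  rw [Units.continuous_iff]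
  refine ⟨Complex.continuous_ofReal.comp Units.continuous_val, ?_⟩
  have : (fun x : ℝˣ => (((rHom x)⁻¹ : ℂˣ) : ℂ)) = fun x => (((x⁻¹ : ℝˣ) : ℝ) : ℂ) := rfl
  rw [this]
  exact Complex.continuous_ofReal.comp (Units.continuous_val.comp continuous_inv)

lemma continuous_circUnits : Continuous (Circle.toUnits) := by
  rw [Units.continuous_iff]
  constructor
  · exact continuous_subtype_val
  · have : (fun y : Circle => (((Circle.toUnits y)⁻¹ : ℂˣ) : ℂ)) = fun y => ((y⁻¹ : Circle) : ℂ) := by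
      funext y
      rw [← map_inv Circle.toUnits]
      rfl
    rw [this]
    exact continuous_subtype_val.comp continuous_inv

/-- the fixed subgroup of the model involution, explicitly -/
def blockEquiv (a b c : ℕ) :
    ((Fin a → ℝˣ) × (Fin b → Circle) × (Fin c → ℂˣ)) ≃*
      fixedSubgroup (sigmaGen (Dmat a b c)) where
  toFun t := ⟨fun j => match j with
    | .inl (.inl i) => rHom (t.1 i)
    | .inl (.inr i) => Circle.toUnits (t.2.1 i)
    | .inr (.inl i) => t.2.2 i
    | .inr (.inr i) => uconj (t.2.2 i), by
      rw [mem_fixed_Dmat]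
      rintro ((i | i) | (i | i))
      · show uconj (rHom (t.1 i)) ^ (1 : ℤ) = rHom (t.1 i)
        rw [zpow_one]
        ext
        exact Complex.conj_ofReal _
      · show uconj (Circle.toUnits (t.2.1 i)) ^ (-1 : ℤ) = Circle.toUnits (t.2.1 i)
        rw [zpow_neg_one, inv_eq_iff_eq_inv]
        ext
        show (starRingEnd ℂ) ((t.2.1 i : Circle) : ℂ) = (((Circle.toUnits (t.2.1 i))⁻¹ : ℂˣ) : ℂ)
        rw [← map_inv Circle.toUnits]
        show _ = (((t.2.1 i)⁻¹ : Circle) : ℂ)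
        rw [Circle.coe_inv_eq_conj]
      · show uconj (uconj (t.2.2 i)) ^ (1 : ℤ) = t.2.2 i
        rw [zpow_one, uconj_uconj]
      · show uconj (t.2.2 i) ^ (1 : ℤ) = uconj (t.2.2 i)
        rw [zpow_one]⟩
  invFun z :=
    (fun i => realOf (z.1 (.inl (.inl i))) (by
        have hz := (mem_fixed_Dmat z.1).1 z.2 (.inl (.inl i))
        rw [show bPerm (.inl (.inl i) : BIdx a b c) = .inl (.inl i) from rfl] at hz
        rw [show bSgn (.inl (.inl i) : BIdx a b c) = 1 from rfl, zpow_one] at hz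
        exact congrArg Units.val hz),
     fun i => circOf (z.1 (.inl (.inr i))) (by
        have hz := (mem_fixed_Dmat z.1).1 z.2 (.inl (.inr i))
        rw [show bPerm (.inl (.inr i) : BIdx a b c) = .inl (.inr i) from rfl] at hz
        rw [show bSgn (.inl (.inr i) : BIdx a b c) = -1 from rfl, zpow_neg_one,
          inv_eq_iff_eq_inv] at hz
        exact hz),
     fun i => z.1 (.inr (.inl i)))
  left_inv t := by
    refine Prod.ext ?_ (Prod.ext ?_ ?_)
    · funext i
      ext
      exact Complex.ofReal_injective (realOf_val_c (rHom (t.1 i)) (Complex.conj_ofReal _))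
    · funext i
      exact Subtype.ext rfl
    · rfl
  right_inv z := by
    apply Subtype.ext
    funext j
    rcases j with (i | i) | (i | i)
    · have hz := (mem_fixed_Dmat z.1).1 z.2 (.inl (.inl i))
      rw [show bPerm (.inl (.inl i) : BIdx a b c) = .inl (.inl i) from rfl] at hz
      rw [show bSgn (.inl (.inl i) : BIdx a b c) = 1 from rfl, zpow_one] at hz
      ext
      exact Complex.conj_eq_iff_re.1 (congrArg Units.val hz)
    · ext
      rfl
    · rfl
    · have hz := (mem_fixed_Dmat z.1).1 z.2 (.inr (.inr i))
      rw [show bPerm (.inr (.inr i) : BIdx a b c) = .inr (.inl i) from rfl] at hz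
      rw [show bSgn (.inr (.inr i) : BIdx a b c) = 1 from rfl, zpow_one] at hz
      exact hz
  map_mul' s t := by
    apply Subtype.ext
    funext j
    rcases j with (i | i) | (i | i)
    · show rHom (s.1 i * t.1 i) = rHom (s.1 i) * rHom (t.1 i)
      exact map_mul rHom _ _
    · show Circle.toUnits (s.2.1 i * t.2.1 i) = Circle.toUnits (s.2.1 i) * Circle.toUnits (t.2.1 i)
      exact map_mul Circle.toUnits _ _
    · rfl
    · show uconj (s.2.2 i * t.2.2 i) = uconj (s.2.2 i) * uconj (t.2.2 i)
      exact map_mul uconj _ _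

lemma continuous_blockEquiv (a b c : ℕ) : Continuous (blockEquiv a b c) := by
  apply Continuous.subtype_mk
  apply continuous_pi
  rintro ((i | i) | (i | i))
  · exact continuous_rHom.comp ((continuous_apply i).comp continuous_fst)
  · exact continuous_circUnits.comp ((continuous_apply i).comp (continuous_fst.comp continuous_snd))
  · exact (continuous_apply i).comp (continuous_snd.comp continuous_snd)
  · exact continuous_uconj.comp ((continuous_apply i).comp (continuous_snd.comp continuous_snd))

lemma continuous_blockEquiv_symm (a b c : ℕ) : Continuous (blockEquiv a b c).symm := by
  refine continuous_prodMk.2 ⟨?_, continuous_prodMk.2 ⟨?_, ?_⟩⟩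
  · apply continuous_pi
    intro i
    rw [Units.continuous_iff]
    constructor
    · show Continuous fun z : fixedSubgroup (sigmaGen (Dmat a b c)) =>
        ((z.1 (.inl (.inl i)) : ℂ)).re
      exact Complex.continuous_re.comp (Units.continuous_val.comp
        ((continuous_apply _).comp continuous_subtype_val))
    · show Continuous fun z : fixedSubgroup (sigmaGen (Dmat a b c)) =>
        (((z.1 (.inl (.inl i)))⁻¹ : ℂˣ) : ℂ).re
      exact Complex.continuous_re.comp (Units.continuous_val.comp
        (continuous_inv.comp ((continuous_apply _).comp continuous_subtype_val)))
  · apply continuous_pi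
    intro i
    apply Continuous.subtype_mk
    exact Units.continuous_val.comp ((continuous_apply _).comp continuous_subtype_val)
  · apply continuous_pi
    intro i
    exact (continuous_apply _).comp continuous_subtype_val

end Model

/-! ### transport along a change of basis, and counting for the model -/

noncomputable section Transport

open Matrix

/-- torus isomorphism from a pair of mutually inverse integer matrices -/
def torusMx {ι κ : Type*} [Fintype ι] [Fintype κ] [DecidableEq ι] [DecidableEq κ]
    (E : Matrix ι κ ℤ) (E' : Matrix κ ι ℤ) (hEE' : E * E' = 1) (hE'E : E' * E = 1) :
    (ι → ℂˣ) ≃* (κ → ℂˣ) where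
  toFun := gPow E'
  invFun := gPow E
  left_inv z := by rw [gPow_gPow, hEE', gPow_one]
  right_inv z := by rw [gPow_gPow, hE'E, gPow_one]
  map_mul' := map_mul _

lemma torusMx_intertwine {ι κ : Type*} [Fintype ι] [Fintype κ] [DecidableEq ι] [DecidableEq κ]
    (E : Matrix ι κ ℤ) (E' : Matrix κ ι ℤ) (hEE' : E * E' = 1) (hE'E : E' * E = 1)
    (A : Matrix ι ι ℤ) (D : Matrix κ κ ℤ) (hAE : A * E = E * D) (z : ι → ℂˣ) :
    (torusMx E E' hEE' hE'E) (sigmaGen A z) = sigmaGen D ((torusMx E E' hEE' hE'E) z) := by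
  have key : E' * A = D * E' := by
    have h2 : E' * A * E = D := by
      rw [Matrix.mul_assoc, hAE, ← Matrix.mul_assoc, hE'E, Matrix.one_mul]
    calc E' * A = E' * A * (E * E') := by rw [hEE', Matrix.mul_one]
    _ = E' * A * E * E' := by rw [← Matrix.mul_assoc]
    _ = D * E' := by rw [h2]
  show gPow E' (sigmaGen A z) = sigmaGen D (gPow E' z)
  rw [sigmaGen_apply, sigmaGen_apply, gPow_gPow, ← gPow_cconj, gPow_gPow, key]

/-- transported fixed subgroups -/
def fixedMx {ι κ : Type*} [Fintype ι] [Fintype κ] [DecidableEq ι] [DecidableEq κ]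
    (E : Matrix ι κ ℤ) (E' : Matrix κ ι ℤ) (hEE' : E * E' = 1) (hE'E : E' * E = 1)
    (A : Matrix ι ι ℤ) (D : Matrix κ κ ℤ) (hAE : A * E = E * D) :
    fixedSubgroup (sigmaGen A) ≃* fixedSubgroup (sigmaGen D) :=
  fixedCongr (torusMx E E' hEE' hE'E) (torusMx_intertwine E E' hEE' hE'E A D hAE)

lemma continuous_fixedMx {ι κ : Type*} [Fintype ι] [Fintype κ] [DecidableEq ι] [DecidableEq κ]
    (E : Matrix ι κ ℤ) (E' : Matrix κ ι ℤ) (hEE' : E * E' = 1) (hE'E : E' * E = 1)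
    (A : Matrix ι ι ℤ) (D : Matrix κ κ ℤ) (hAE : A * E = E * D) :
    Continuous (fixedMx E E' hEE' hE'E A D hAE) ∧
      Continuous (fixedMx E E' hEE' hE'E A D hAE).symm := by
  constructor
  · exact Continuous.subtype_mk ((continuous_gPow E').comp continuous_subtype_val) _
  · exact Continuous.subtype_mk ((continuous_gPow E).comp continuous_subtype_val) _

/-- kernels transport along mutually inverse matrices -/
lemma map_ker_matrix {ι κ : Type*} [Fintype ι] [Fintype κ] [DecidableEq ι] [DecidableEq κ]
    (E : Matrix ι κ ℤ) (E' : Matrix κ ι ℤ) (hEE' : E * E' = 1) (hE'E : E' * E = 1)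
    (X : Matrix ι ι ℤ) (Y : Matrix κ κ ℤ) (hXY : X * E = E * Y) :
    Submodule.map (Matrix.mulVecLin E') (LinearMap.ker (Matrix.mulVecLin X)) =
      LinearMap.ker (Matrix.mulVecLin Y) := by
  have hYE' : Y * E' = E' * X := by
    have h2 : E' * X * E = Y := by
      rw [Matrix.mul_assoc, hXY, ← Matrix.mul_assoc, hE'E, Matrix.one_mul]
    calc Y * E' = E' * X * E * E' := by rw [h2]
    _ = E' * X * (E * E') := by rw [Matrix.mul_assoc]
    _ = E' * X := by rw [hEE', Matrix.mul_one]
  apply le_antisymm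
  · rintro w ⟨v, hv, rfl⟩
    have hv' : X *ᵥ v = 0 := hv
    show Y *ᵥ (E' *ᵥ v) = 0
    rw [Matrix.mulVec_mulVec, hYE', ← Matrix.mulVec_mulVec, hv', Matrix.mulVec_zero]
  · intro w hw
    have hw' : Y *ᵥ w = 0 := hw
    refine ⟨E *ᵥ w, ?_, ?_⟩
    · show X *ᵥ (E *ᵥ w) = 0
      rw [Matrix.mulVec_mulVec, hXY, ← Matrix.mulVec_mulVec, hw', Matrix.mulVec_zero]
    · show E' *ᵥ (E *ᵥ w) = w
      rw [Matrix.mulVec_mulVec, hE'E, Matrix.one_mulVec]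

/-! ### kernels and quotient for the model matrix -/

lemma Dmat_mulVec {a b c : ℕ} (v : BIdx a b c → ℤ) (j : BIdx a b c) :
    (Dmat a b c *ᵥ v) j = bSgn j * v (bPerm j) := by
  show (∑ k, Dmat a b c j k * v k) = _
  rw [Finset.sum_eq_single (bPerm j)]
  · rw [Dmat, if_pos rfl]
  · intro k _ hk
    rw [Dmat, if_neg hk, zero_mul]
  · intro h; exact absurd (Finset.mem_univ _) h

lemma mem_ker_sub_Dmat {a b c : ℕ} (v : BIdx a b c → ℤ) :
    v ∈ LinearMap.ker (Matrix.mulVecLin (1 - Dmat a b c)) ↔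
      ∀ j, v j = bSgn j * v (bPerm j) := by
  rw [LinearMap.mem_ker]
  show (1 - Dmat a b c) *ᵥ v = 0 ↔ _
  rw [Matrix.sub_mulVec, funext_iff]
  refine forall_congr' fun j => ?_
  rw [Matrix.one_mulVec]
  show v j - (Dmat a b c *ᵥ v) j = 0 ↔ _
  rw [Dmat_mulVec, sub_eq_zero]

lemma mem_ker_add_Dmat {a b c : ℕ} (v : BIdx a b c → ℤ) :
    v ∈ LinearMap.ker (Matrix.mulVecLin (1 + Dmat a b c)) ↔
      ∀ j, v j = -(bSgn j * v (bPerm j)) := by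
  rw [LinearMap.mem_ker]
  show (1 + Dmat a b c) *ᵥ v = 0 ↔ _
  rw [Matrix.add_mulVec, funext_iff]
  refine forall_congr' fun j => ?_
  rw [Matrix.one_mulVec]
  show v j + (Dmat a b c *ᵥ v) j = 0 ↔ _
  rw [Dmat_mulVec, add_eq_zero_iff_eq_neg]

def kerSubEquiv (a b c : ℕ) :
    LinearMap.ker (Matrix.mulVecLin (1 - Dmat a b c)) ≃ₗ[ℤ] (Fin a → ℤ) × (Fin c → ℤ) where
  toFun v := (fun i => v.1 (.inl (.inl i)), fun i => v.1 (.inr (.inl i)))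
  map_add' _ _ := rfl
  map_smul' _ _ := rfl
  invFun t := ⟨fun j => match j with
    | .inl (.inl i) => t.1 i
    | .inl (.inr _) => 0
    | .inr (.inl i) => t.2 i
    | .inr (.inr i) => t.2 i, by
      rw [mem_ker_sub_Dmat]
      rintro ((i | i) | (i | i)) <;> simp⟩
  left_inv v := by
    apply Subtype.ext
    funext j
    have hv := (mem_ker_sub_Dmat v.1).1 v.2
    rcases j with (i | i) | (i | i)
    · rfl
    · have := hv (.inl (.inr i))
      simp at this
      show (0 : ℤ) = v.1 (.inl (.inr i))
      omega
    · rfl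
    · have := hv (.inr (.inr i))
      simp at this
      show v.1 (.inr (.inl i)) = v.1 (.inr (.inr i))
      omega
  right_inv t := rfl

def kerAddEquiv (a b c : ℕ) :
    LinearMap.ker (Matrix.mulVecLin (1 + Dmat a b c)) ≃ₗ[ℤ] (Fin b → ℤ) × (Fin c → ℤ) where
  toFun v := (fun i => v.1 (.inl (.inr i)), fun i => v.1 (.inr (.inl i)))
  map_add' _ _ := rfl
  map_smul' _ _ := rfl
  invFun t := ⟨fun j => match j with
    | .inl (.inl _) => 0
    | .inl (.inr i) => t.1 i
    | .inr (.inl i) => t.2 i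
    | .inr (.inr i) => -t.2 i, by
      rw [mem_ker_add_Dmat]
      rintro ((i | i) | (i | i)) <;> simp⟩
  left_inv v := by
    apply Subtype.ext
    funext j
    have hv := (mem_ker_add_Dmat v.1).1 v.2
    rcases j with (i | i) | (i | i)
    · have := hv (.inl (.inl i))
      simp at this
      show (0 : ℤ) = v.1 (.inl (.inl i))
      omega
    · rfl
    · rfl
    · have := hv (.inr (.inr i))
      simp at this
      show -v.1 (.inr (.inl i)) = v.1 (.inr (.inr i))
      omega
  right_inv t := rfl

lemma finrank_ker_sub_Dmat (a b c : ℕ) :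
    Module.finrank ℤ (LinearMap.ker (Matrix.mulVecLin (1 - Dmat a b c))) = a + c := by
  rw [LinearEquiv.finrank_eq (kerSubEquiv a b c), Module.finrank_prod, Module.finrank_pi,
    Module.finrank_pi, Fintype.card_fin, Fintype.card_fin]

lemma finrank_ker_add_Dmat (a b c : ℕ) :
    Module.finrank ℤ (LinearMap.ker (Matrix.mulVecLin (1 + Dmat a b c))) = b + c := by
  rw [LinearEquiv.finrank_eq (kerAddEquiv a b c), Module.finrank_prod, Module.finrank_pi,
    Module.finrank_pi, Fintype.card_fin, Fintype.card_fin]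

/-- the mod-two functional cutting out the sup of the two kernels -/
def phiD (a b c : ℕ) : (BIdx a b c → ℤ) →ₗ[ℤ] (Fin c → ZMod 2) where
  toFun v := fun i => ((v (.inr (.inl i)) + v (.inr (.inr i)) : ℤ) : ZMod 2)
  map_add' v w := by
    funext i
    simp only [Pi.add_apply]
    push_cast
    ring
  map_smul' m v := by
    funext i
    show ((m * _ + m * _ : ℤ) : ZMod 2) = m • _
    rw [zsmul_eq_mul]
    push_cast
    ring

lemma phiD_surjective (a b c : ℕ) : Function.Surjective (phiD a b c) := by
  intro t
  refine ⟨fun j => match j with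
    | .inr (.inl i) => ((t i).val : ℤ)
    | _ => 0, ?_⟩
  funext i
  show ((((t i).val : ℤ) + (0 : ℤ) : ℤ) : ZMod 2) = t i
  rw [add_zero]
  push_cast
  simp [ZMod.natCast_val, ZMod.cast_id]

lemma ker_phiD (a b c : ℕ) :
    LinearMap.ker (phiD a b c) =
      LinearMap.ker (Matrix.mulVecLin (1 - Dmat a b c)) ⊔
        LinearMap.ker (Matrix.mulVecLin (1 + Dmat a b c)) := by
  apply le_antisymm
  · intro v hv
    rw [LinearMap.mem_ker] at hv
    have hdvd : ∀ i : Fin c, (2 : ℤ) ∣ (v (.inr (.inl i)) + v (.inr (.inr i))) := by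
      intro i
      have h0 : ((v (.inr (.inl i)) + v (.inr (.inr i)) : ℤ) : ZMod 2) = 0 := by
        have := congrFun hv i
        rwa [Pi.zero_apply] at this
      exact (ZMod.intCast_zmod_eq_zero_iff_dvd _ 2).1 h0
    set s : Fin c → ℤ := fun i => (v (.inr (.inl i)) + v (.inr (.inr i))) / 2 with hs
    have hs2 : ∀ i, 2 * s i = v (.inr (.inl i)) + v (.inr (.inr i)) :=
      fun i => Int.mul_ediv_cancel' (hdvd i)
    set vp : BIdx a b c → ℤ := Sum.elim
      (Sum.elim (fun i => v (.inl (.inl i))) (fun _ => 0))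
      (Sum.elim s s) with hvp
    rw [Submodule.mem_sup]
    refine ⟨vp, ?_, v - vp, ?_, by abel⟩
    · rw [mem_ker_sub_Dmat]
      rintro ((i | i) | (i | i)) <;> simp [hvp]
    · rw [mem_ker_add_Dmat]
      rintro ((i | i) | (i | i))
      · simp [hvp]
      · simp [hvp]
      · simp only [Pi.sub_apply, bPerm_cl, bSgn_cl, one_mul, hvp, Sum.elim_inr, Sum.elim_inl]
        have := hs2 i
        omega
      · simp only [Pi.sub_apply, bPerm_cr, bSgn_cr, one_mul, hvp, Sum.elim_inr, Sum.elim_inl]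
        have := hs2 i
        omega
  · rw [sup_le_iff]
    constructor
    · intro v hv
      rw [mem_ker_sub_Dmat] at hv
      rw [LinearMap.mem_ker]
      funext i
      show ((v (.inr (.inl i)) + v (.inr (.inr i)) : ℤ) : ZMod 2) = 0
      have h1 := hv (.inr (.inl i))
      simp at h1
      rw [h1]
      push_cast
      exact CharTwo.add_self_eq_zero _
    · intro v hv
      rw [mem_ker_add_Dmat] at hv
      rw [LinearMap.mem_ker]
      funext i
      show ((v (.inr (.inl i)) + v (.inr (.inr i)) : ℤ) : ZMod 2) = 0
      have h1 := hv (.inr (.inl i))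
      simp at h1
      rw [h1]
      simp

lemma card_quot_Dmat (a b c : ℕ) :
    Nat.card ((BIdx a b c → ℤ) ⧸
      (LinearMap.ker (Matrix.mulVecLin (1 - Dmat a b c)) ⊔
        LinearMap.ker (Matrix.mulVecLin (1 + Dmat a b c)))) = 2 ^ c := by
  rw [← ker_phiD]
  rw [Nat.card_congr ((phiD a b c).quotKerEquivOfSurjective (phiD_surjective a b c)).toEquiv]
  rw [Nat.card_eq_fintype_card]
  simp

end Transport

/-! ### Reiner's theorem: classification of integral involutions -/

noncomputable section Reiner

open Module Submodule

/-- saturation of a submodule -/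
def satSub {R N : Type*} [CommRing R] [IsDomain R] [AddCommGroup N] [Module R N] (W : Submodule R N) : Submodule R N where
  carrier := {m | ∃ k : R, k ≠ 0 ∧ k • m ∈ W}
  zero_mem' := ⟨1, one_ne_zero, by simp⟩
  add_mem' := by
    rintro a' b' ⟨k, hk, hkW⟩ ⟨l, hl, hlW⟩
    refine ⟨k * l, mul_ne_zero hk hl, ?_⟩
    rw [smul_add]
    apply Submodule.add_mem
    · rw [mul_comm, mul_smul]; exact W.smul_mem l hkW
    · rw [mul_smul]; exact W.smul_mem k hlW
  smul_mem' := by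
    rintro c m ⟨k, hk, hkW⟩
    exact ⟨k, hk, by rw [smul_comm]; exact W.smul_mem c hkW⟩

lemma le_satSub {R N : Type*} [CommRing R] [IsDomain R] [AddCommGroup N] [Module R N] (W : Submodule R N) :
    W ≤ satSub W := fun m hm => ⟨1, one_ne_zero, by simpa⟩

lemma satSub_saturated {R N : Type*} [CommRing R] [IsDomain R] [AddCommGroup N] [Module R N]
    (W : Submodule R N)
    (k : R) (m : N) (hk : k ≠ 0) (h : k • m ∈ satSub W) : m ∈ satSub W := by
  obtain ⟨l, hl, hw⟩ := h
  exact ⟨l * k, mul_ne_zero hl hk, by rwa [mul_smul]⟩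

/-- value of a product basis mapped through the complement equivalence -/
lemma prod_basis_value {R N : Type*} [Ring R] [AddCommGroup N] [Module R N]
    (S T : Submodule R N) (h : IsCompl S T) {ιS ιT : Type*}
    (bS : Basis ιS R S) (bT : Basis ιT R T) (j : ιS ⊕ ιT) :
    (((bS.prod bT).map (Submodule.prodEquivOfIsCompl S T h)) j : N) =
      Sum.elim (fun i => (bS i : N)) (fun i => (bT i : N)) j := by
  rcases j with i | i <;>
    simp [Basis.map_apply, Basis.prod_apply, Submodule.coe_prodEquivOfIsCompl]

/-- the index gluing equivalence for the induction step -/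
def stepEquiv (a b c : ℕ) : (Bool ⊕ BIdx a b c) ≃ BIdx a b (c + 1) where
  toFun j := match j with
    | .inl false => .inr (.inl (Fin.last c))
    | .inl true  => .inr (.inr (Fin.last c))
    | .inr (.inl s) => .inl s
    | .inr (.inr (.inl i)) => .inr (.inl i.castSucc)
    | .inr (.inr (.inr i)) => .inr (.inr i.castSucc)
  invFun k := match k with
    | .inl s => .inr (.inl s)
    | .inr (.inl i) =>
        if h : i = Fin.last c then .inl false else .inr (.inr (.inl (i.castPred h)))
    | .inr (.inr i) =>
        if h : i = Fin.last c then .inl true else .inr (.inr (.inr (i.castPred h)))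
  left_inv j := by
    rcases j with (_ | _) | (s | (i | i))
    · simp
    · simp
    · rfl
    · simp [(Fin.castSucc_lt_last i).ne, Fin.castPred_castSucc]
    · simp [(Fin.castSucc_lt_last i).ne, Fin.castPred_castSucc]
  right_inv k := by
    rcases k with s | (i | i)
    · rfl
    · by_cases h : i = Fin.last c
      · subst h; simp
      · simp [h, Fin.castSucc_castPred]
    · by_cases h : i = Fin.last c
      · subst h; simp
      · simp [h, Fin.castSucc_castPred]

lemma stepEquiv_perm {a b c : ℕ} (j : Bool ⊕ BIdx a b c) :
    bPerm (stepEquiv a b c j) = stepEquiv a b c (Sum.map not bPerm j) := by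
  rcases j with (_ | _) | ((s | s) | (i | i)) <;> rfl

lemma stepEquiv_sgn {a b c : ℕ} (j : Bool ⊕ BIdx a b c) :
    bSgn (stepEquiv a b c j) = Sum.elim (fun _ => (1 : ℤ)) bSgn j := by
  rcases j with (_ | _) | ((s | s) | (i | i)) <;> rfl

theorem reinerR (R : Type) [CommRing R] [IsDomain R] [IsPrincipalIdealRing R]
    (h2 : (2 : R) ≠ 0) (hpar : ∀ r : R, ∃ s, r = 2 * s ∨ r = 2 * s + 1)
    (hodd : ∀ s t : R, 2 * s ≠ 2 * t + 1) :
    ∀ (n : ℕ) (N : Type) [AddCommGroup N] [Module R N],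
    ∀ [Module.Free R N] [Module.Finite R N] (f : N →ₗ[R] N), (∀ x, f (f x) = x) →
    Module.finrank R N = n →
    ∃ (a b c : ℕ) (v : Basis (BIdx a b c) R N),
      ∀ j, f (v j) = ((bSgn j : ℤ) : R) • v (bPerm j) := by
  intro n
  induction n using Nat.strong_induction_on with
  | _ n IH =>
  intro N _inst1 _inst2 _inst3 _inst4 f hf hrank
  set Mp := LinearMap.ker (LinearMap.id - f) with hMp
  set Mm := LinearMap.ker (LinearMap.id + f) with hMm
  have mem_Mp : ∀ y, y ∈ Mp ↔ f y = y := by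
    intro y
    rw [hMp, LinearMap.mem_ker, LinearMap.sub_apply, LinearMap.id_apply, sub_eq_zero]
    exact eq_comm
  have mem_Mm : ∀ y, y ∈ Mm ↔ f y = -y := by
    intro y
    rw [hMm, LinearMap.mem_ker, LinearMap.add_apply, LinearMap.id_apply, add_comm,
      add_eq_zero_iff_eq_neg]
  have disjPM : ∀ y, y ∈ Mp → y ∈ Mm → y = 0 := by
    intro y hy1 hy2
    have e1 : f y = y := (mem_Mp y).1 hy1
    have e2 : f y = -y := (mem_Mm y).1 hy2
    have h3 : y = -y := e1.symm.trans e2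
    have h4 : (2 : R) • y = 0 := by
      rw [two_smul]
      nth_rewrite 2 [h3]
      exact add_neg_cancel y
    rcases smul_eq_zero.1 h4 with h | h
    · exact absurd h h2
    · exact h
  by_cases hT : Mp ⊔ Mm = ⊤
  · -- base case
    have hdisj : Disjoint Mp Mm := by
      rw [Submodule.disjoint_def]
      exact disjPM
    have hcompl : IsCompl Mp Mm := ⟨hdisj, codisjoint_iff.2 hT⟩
    set a := finrank R Mp with ha
    set b := finrank R Mm with hb
    let bP : Basis (Fin a) R Mp := Module.finBasis R Mp
    let bM : Basis (Fin b) R Mm := Module.finBasis R Mm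
    let eqv : (Fin a ⊕ Fin b) ≃ BIdx a b 0 :=
      (Equiv.sumEmpty (Fin a ⊕ Fin b) (Fin 0 ⊕ Fin 0)).symm
    let w : Basis (BIdx a b 0) R N :=
      ((bP.prod bM).map (Submodule.prodEquivOfIsCompl Mp Mm hcompl)).reindex eqv
    refine ⟨a, b, 0, w, ?_⟩
    have hval : ∀ s : Fin a ⊕ Fin b,
        w (.inl s) = Sum.elim (fun i => (bP i : N)) (fun i => (bM i : N)) s := by
      intro s
      rw [show w (.inl s) =
        ((bP.prod bM).map (Submodule.prodEquivOfIsCompl Mp Mm hcompl)) (eqv.symm (.inl s))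
        from Basis.reindex_apply _ _ _]
      rw [show eqv.symm (.inl s) = s from rfl]
      exact prod_basis_value Mp Mm hcompl bP bM s
    rintro ((i | i) | (i | i))
    · rw [bPerm_aa, bSgn_aa, hval (.inl i)]
      rw [show (((1 : ℤ) : R)) = 1 from Int.cast_one, one_smul]
      exact (mem_Mp _).1 (bP i).2
    · rw [bPerm_bb, bSgn_bb, hval (.inr i)]
      rw [show Sum.elim (fun i => (bP i : N)) (fun i => (bM i : N)) (Sum.inr i) = (bM i : N)
        from rfl]
      rw [(mem_Mm _).1 (bM i).2]
      simp
    · exact i.elim0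
    · exact i.elim0
  · -- inductive step
    have hex : ∃ x, x ∉ Mp ⊔ Mm := by
      by_contra h
      push_neg at h
      exact hT (Submodule.eq_top_iff'.2 h)
    obtain ⟨x, hx⟩ := hex
    have hu0 : x + f x ≠ 0 := by
      intro h
      apply hx
      exact Submodule.mem_sup_right ((mem_Mm x).2
        (by rw [eq_neg_iff_add_eq_zero, add_comm]; exact h))
    have hv0 : x - f x ≠ 0 := by
      intro h
      apply hx
      apply Submodule.mem_sup_left
      apply (mem_Mp x).2
      have : x - f x = 0 := h
      have h2 : f x - x = 0 := by rw [← neg_sub x (f x), this, neg_zero]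
      rw [← sub_eq_zero]
      exact h2
    set W : Submodule R N := Submodule.span R {x, f x} with hW
    have hxW : x ∈ W := Submodule.subset_span (by simp)
    have hfxW : f x ∈ W := Submodule.subset_span (by simp)
    have hWf : ∀ m ∈ W, f m ∈ W := by
      intro m hm
      rw [hW, Submodule.mem_span_pair] at hm ⊢
      obtain ⟨p, q, rfl⟩ := hm
      exact ⟨q, p, by rw [map_add, map_smul, map_smul, hf x]; abel⟩
    set S : Submodule R N := satSub W with hS
    have hxS : x ∈ S := le_satSub W hxW
    have hfxS : f x ∈ S := le_satSub W hfxW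
    have hSf : ∀ m ∈ S, f m ∈ S := by
      rintro m ⟨k, hk, hw⟩
      exact ⟨k, hk, by rw [← map_smul]; exact hWf _ hw⟩
    have hqtf : NoZeroSMulDivisors R (N ⧸ S) := by
      constructor
      intro k mq h
      obtain ⟨m, rfl⟩ := Submodule.Quotient.mk_surjective S mq
      by_cases hk : k = 0
      · exact Or.inl hk
      · right
        rw [← Submodule.Quotient.mk_smul, Submodule.Quotient.mk_eq_zero] at h
        rw [Submodule.Quotient.mk_eq_zero]
        exact satSub_saturated W k m hk h
    haveI := hqtf
    haveI hqfree : Module.Free R (N ⧸ S) := Module.free_of_finite_type_torsion_free'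
    obtain ⟨g, hg⟩ := Module.projective_lifting_property S.mkQ
      (LinearMap.id : (N ⧸ S) →ₗ[R] (N ⧸ S)) (Submodule.mkQ_surjective S)
    set π : N →ₗ[R] N := LinearMap.id - g ∘ₗ S.mkQ with hπ
    have hπS : ∀ m, π m ∈ S := by
      intro m
      have h1 : S.mkQ (π m) = 0 := by
        rw [hπ]
        simp only [LinearMap.sub_apply, LinearMap.id_apply, LinearMap.comp_apply, map_sub]
        rw [show S.mkQ (g (S.mkQ m)) = (S.mkQ ∘ₗ g) (S.mkQ m) from rfl, hg]
        simp
      rwa [Submodule.mkQ_apply, Submodule.Quotient.mk_eq_zero] at h1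
    have hπid : ∀ m ∈ S, π m = m := by
      intro m hm
      have h1 : S.mkQ m = 0 := by rwa [Submodule.mkQ_apply, Submodule.Quotient.mk_eq_zero]
      rw [hπ]
      simp only [LinearMap.sub_apply, LinearMap.id_apply, LinearMap.comp_apply]
      rw [show S.mkQ m = 0 from h1, map_zero, sub_zero]
    have hli : LinearIndependent R ![x, f x] := by
      rw [LinearIndependent.pair_iff]
      intro s t hst
      have hswap : s • f x + t • x = 0 := by
        have h3 := congrArg f hst
        rwa [map_add, map_smul, map_smul, hf x, map_zero] at h3
      have hsum : (s + t) • (x + f x) = 0 := by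
        calc (s + t) • (x + f x) = (s • x + t • f x) + (s • f x + t • x) := by
              rw [add_smul, smul_add, smul_add]; abel
        _ = 0 := by rw [hst, hswap, add_zero]
      have hdif : (s - t) • (x - f x) = 0 := by
        calc (s - t) • (x - f x) = (s • x + t • f x) - (s • f x + t • x) := by
              rw [sub_smul, smul_sub, smul_sub]; abel
        _ = 0 := by rw [hst, hswap, sub_zero]
      have h5 : s + t = 0 := by
        rcases smul_eq_zero.1 hsum with h | h
        · exact h
        · exact absurd h hu0
      have h6 : s - t = 0 := by
        rcases smul_eq_zero.1 hdif with h | h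
        · exact h
        · exact absurd h hv0
      have h7 : (2 : R) * s = 0 := by linear_combination h5 + h6
      have hs0 : s = 0 := by
        rcases mul_eq_zero.1 h7 with h | h
        · exact absurd h h2
        · exact h
      refine ⟨hs0, ?_⟩
      rw [hs0, zero_add] at h5
      exact h5
    have hrange : Set.range ![x, f x] = {x, f x} := by
      rw [Set.pair_comm]
      simp [Matrix.range_cons, Matrix.range_empty]
    have hWr : W = Submodule.span R (Set.range ![x, f x]) := by rw [hrange]
    have hrkW : finrank R W = 2 := by
      rw [hWr, Module.finrank_eq_card_basis (Basis.span hli)]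
      simp
    have hSfg : S.FG := (isNoetherian_def.mp inferInstance) S
    obtain ⟨T, hTspan⟩ := hSfg
    haveI : DecidableEq N := Classical.decEq N
    have hchoice : ∀ t : N, t ∈ S → ∃ k : R, k ≠ 0 ∧ k • t ∈ W := fun t ht => ht
    choose kf hkf0 hkfW using fun t : {y // y ∈ T} =>
      hchoice t (hTspan ▸ Submodule.subset_span t.2)
    set K : R := ∏ t ∈ T.attach, kf t with hK
    have hK0 : K ≠ 0 := Finset.prod_ne_zero_iff.2 fun t _ => hkf0 t
    have hKW : ∀ s ∈ S, K • s ∈ W := by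
      intro s hs
      rw [← hTspan] at hs
      induction hs using Submodule.span_induction with
      | mem t ht =>
        have hfact : (∏ y ∈ T.attach.erase ⟨t, ht⟩, kf y) * kf ⟨t, ht⟩ = K :=
          Finset.prod_erase_mul _ _ (Finset.mem_attach T ⟨t, ht⟩)
        rw [← hfact, mul_smul]
        exact W.smul_mem _ (hkfW ⟨t, ht⟩)
      | zero => simp
      | add y z hy hz hy' hz' => rw [smul_add]; exact W.add_mem hy' hz'
      | smul c y hy hy' => rw [smul_comm]; exact W.smul_mem c hy'
    have hWS : W ≤ S := le_satSub W
    have hrkS : finrank R S = 2 := by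
      apply le_antisymm
      · let ψ : S →ₗ[R] W :=
          { toFun := fun s => ⟨K • (s : N), hKW s s.2⟩
            map_add' := by intro s t; apply Subtype.ext; simp [smul_add]
            map_smul' := by intro c s; apply Subtype.ext; simp [smul_comm K c] }
        have hψinj : Function.Injective ψ := by
          intro s t h
          apply Subtype.ext
          have h1 : K • (s : N) = K • (t : N) := congrArg Subtype.val h
          exact smul_right_injective N hK0 h1
        rw [← hrkW]
        exact LinearMap.finrank_le_finrank_of_injective hψinj
      · rw [← hrkW]
        exact LinearMap.finrank_le_finrank_of_injective (Submodule.inclusion_injective hWS)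
    set Sp : Submodule R N := S ⊓ Mp with hSpdef
    set Sm : Submodule R N := S ⊓ Mm with hSmdef
    have hfu : f (x + f x) = x + f x := by rw [map_add, hf x]; abel
    have hfv : f (x - f x) = -(x - f x) := by rw [map_sub, hf x]; abel
    have hu_mem : x + f x ∈ Sp :=
      Submodule.mem_inf.2 ⟨S.add_mem hxS hfxS, (mem_Mp _).2 hfu⟩
    have hv_mem : x - f x ∈ Sm :=
      Submodule.mem_inf.2 ⟨S.sub_mem hxS hfxS, (mem_Mm _).2 hfv⟩
    haveI hntSp : Nontrivial Sp :=
      ⟨⟨⟨x + f x, hu_mem⟩, 0, fun h => hu0 (congrArg Subtype.val h)⟩⟩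
    haveI hntSm : Nontrivial Sm :=
      ⟨⟨⟨x - f x, hv_mem⟩, 0, fun h => hv0 (congrArg Subtype.val h)⟩⟩
    have hrkSp1 : 1 ≤ finrank R Sp := Module.finrank_pos
    have hrkSm1 : 1 ≤ finrank R Sm := Module.finrank_pos
    have hsum2 : finrank R Sp + finrank R Sm ≤ 2 := by
      let θ : (Sp × Sm) →ₗ[R] S :=
        { toFun := fun pm => ⟨(pm.1 : N) + (pm.2 : N),
            S.add_mem (Submodule.mem_inf.1 pm.1.2).1 (Submodule.mem_inf.1 pm.2.2).1⟩
          map_add' := by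
            intro s t
            apply Subtype.ext
            simp only [Prod.fst_add, Prod.snd_add, Submodule.coe_add]
            abel
          map_smul' := by
            intro c s
            apply Subtype.ext
            simp only [Prod.smul_fst, Prod.smul_snd, Submodule.coe_smul, RingHom.id_apply]
            rw [smul_add] }
      have hθinj : Function.Injective θ := by
        intro s t h
        have h1 : (s.1 : N) + (s.2 : N) = (t.1 : N) + (t.2 : N) := congrArg Subtype.val h
        have hyp : ((s.1 : N) - (t.1 : N)) ∈ Mp :=
          Mp.sub_mem (Submodule.mem_inf.1 s.1.2).2 (Submodule.mem_inf.1 t.1.2).2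
        have hym : ((s.1 : N) - (t.1 : N)) ∈ Mm := by
          have he : (s.1 : N) - (t.1 : N) = (t.2 : N) - (s.2 : N) := by
            rw [sub_eq_sub_iff_add_eq_add, h1]
            abel
          rw [he]
          exact Mm.sub_mem (Submodule.mem_inf.1 t.2.2).2 (Submodule.mem_inf.1 s.2.2).2
        have hz := disjPM _ hyp hym
        have e1 : s.1 = t.1 := Subtype.ext (by rwa [sub_eq_zero] at hz)
        have e2 : s.2 = t.2 := by
          apply Subtype.ext
          rw [show (s.1 : N) = (t.1 : N) from congrArg Subtype.val e1] at h1
          exact add_left_cancel h1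
        exact Prod.ext e1 e2
      rw [← Module.finrank_prod, ← hrkS]
      exact LinearMap.finrank_le_finrank_of_injective hθinj
    have hrkSp : finrank R Sp = 1 := by omega
    have hrkSm : finrank R Sm = 1 := by omega
    let bp : Basis (Fin 1) R Sp := (Module.finBasis R Sp).reindex (finCongr hrkSp)
    let bm : Basis (Fin 1) R Sm := (Module.finBasis R Sm).reindex (finCongr hrkSm)
    set a₀ : N := (bp 0 : N) with ha₀def
    set b₀ : N := (bm 0 : N) with hb₀def
    have genSp : ∀ s ∈ Sp, ∃ m : R, m • a₀ = s := by
      intro s hs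
      refine ⟨bp.repr ⟨s, hs⟩ 0, ?_⟩
      have h1 : (bp.repr ⟨s, hs⟩ 0) • bp 0 = (⟨s, hs⟩ : Sp) := by
        have h2 := bp.sum_repr ⟨s, hs⟩
        rwa [Fin.sum_univ_one] at h2
      have h3 := congrArg Subtype.val h1
      rwa [Submodule.coe_smul] at h3
    have genSm : ∀ s ∈ Sm, ∃ m : R, m • b₀ = s := by
      intro s hs
      refine ⟨bm.repr ⟨s, hs⟩ 0, ?_⟩
      have h1 : (bm.repr ⟨s, hs⟩ 0) • bm 0 = (⟨s, hs⟩ : Sm) := by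
        have h2 := bm.sum_repr ⟨s, hs⟩
        rwa [Fin.sum_univ_one] at h2
      have h3 := congrArg Subtype.val h1
      rwa [Submodule.coe_smul] at h3
    have ha₀Sp : a₀ ∈ Sp := (bp 0).2
    have hb₀Sm : b₀ ∈ Sm := (bm 0).2
    have ha₀S : a₀ ∈ S := (Submodule.mem_inf.1 ha₀Sp).1
    have hb₀S : b₀ ∈ S := (Submodule.mem_inf.1 hb₀Sm).1
    have ha₀Mp : a₀ ∈ Mp := (Submodule.mem_inf.1 ha₀Sp).2
    have hb₀Mm : b₀ ∈ Mm := (Submodule.mem_inf.1 hb₀Sm).2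
    have hfa₀ : f a₀ = a₀ := (mem_Mp _).1 ha₀Mp
    have hfb₀ : f b₀ = -b₀ := (mem_Mm _).1 hb₀Mm
    obtain ⟨mu, hmu⟩ := genSp (x + f x) hu_mem
    obtain ⟨kv, hkv⟩ := genSm (x - f x) hv_mem
    have ha₀0 : a₀ ≠ 0 := fun h => hu0 (by rw [← hmu, h, smul_zero])
    have hb₀0 : b₀ ≠ 0 := fun h => hv0 (by rw [← hkv, h, smul_zero])
    have hmuodd : ∃ m₁ : R, mu = 2 * m₁ + 1 := by
      obtain ⟨m₁, hm₁ | hm₁⟩ := hpar mu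
      · exfalso
        have e : x + f x = m₁ • a₀ + m₁ • a₀ := by rw [← hmu, hm₁, two_mul, add_smul]
        have hxm : x - m₁ • a₀ ∈ Mm := by
          apply (mem_Mm _).2
          have e2 : f (x - m₁ • a₀) - (-(x - m₁ • a₀)) = 0 := by
            rw [map_sub, map_smul, hfa₀]
            have e3 : f x - m₁ • a₀ - (-(x - m₁ • a₀)) = (x + f x) - (m₁ • a₀ + m₁ • a₀) := by
              abel
            rw [e3, e, sub_self]
          exact sub_eq_zero.1 e2
        exact hx (Submodule.mem_sup.2
          ⟨m₁ • a₀, Mp.smul_mem m₁ ha₀Mp, x - m₁ • a₀, hxm, by abel⟩)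
      · exact ⟨m₁, hm₁⟩
    have hkvodd : ∃ k₁ : R, kv = 2 * k₁ + 1 := by
      obtain ⟨k₁, hk₁ | hk₁⟩ := hpar kv
      · exfalso
        have e : x - f x = k₁ • b₀ + k₁ • b₀ := by rw [← hkv, hk₁, two_mul, add_smul]
        have hxm : x - k₁ • b₀ ∈ Mp := by
          apply (mem_Mp _).2
          have e2 : f (x - k₁ • b₀) - (x - k₁ • b₀) = 0 := by
            rw [map_sub, map_smul, hfb₀, smul_neg]
            have e3 : f x - -(k₁ • b₀) - (x - k₁ • b₀) = (k₁ • b₀ + k₁ • b₀) - (x - f x) := by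
              abel
            rw [e3, ← e, sub_self]
          exact sub_eq_zero.1 e2
        exact hx (Submodule.mem_sup.2
          ⟨x - k₁ • b₀, hxm, k₁ • b₀, Mm.smul_mem k₁ hb₀Mm, by abel⟩)
      · exact ⟨k₁, hk₁⟩
    obtain ⟨m₁, hm₁⟩ := hmuodd
    obtain ⟨k₁, hk₁⟩ := hkvodd
    obtain ⟨c₁, hc₁def⟩ : ∃ cc : N, cc = x - m₁ • a₀ - k₁ • b₀ := ⟨_, rfl⟩
    obtain ⟨c₂, hc₂def⟩ : ∃ cc : N, cc = f c₁ := ⟨_, rfl⟩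
    have hfc₁ : f c₁ = c₂ := hc₂def.symm
    have hfc₂ : f c₂ = c₁ := by rw [hc₂def, hf]
    have hc₂val : c₂ = f x - m₁ • a₀ + k₁ • b₀ := by
      rw [hc₂def, hc₁def, map_sub, map_sub, map_smul, map_smul, hfa₀, hfb₀, smul_neg]
      abel
    have hsum12 : c₁ + c₂ = a₀ := by
      have e : x + f x = (2 * m₁ + 1) • a₀ := by rw [← hmu, hm₁]
      calc c₁ + c₂ = (x + f x) - (m₁ • a₀ + m₁ • a₀) := by rw [hc₂val, hc₁def]; abel
      _ = (2 * m₁ + 1) • a₀ - (m₁ • a₀ + m₁ • a₀) := by rw [e]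
      _ = a₀ := by
          rw [show (2 * m₁ + 1 : R) = m₁ + m₁ + 1 by ring, add_smul, add_smul, one_smul]
          abel
    have hdiff12 : c₁ - c₂ = b₀ := by
      have e : x - f x = (2 * k₁ + 1) • b₀ := by rw [← hkv, hk₁]
      calc c₁ - c₂ = (x - f x) - (k₁ • b₀ + k₁ • b₀) := by rw [hc₂val, hc₁def]; abel
      _ = (2 * k₁ + 1) • b₀ - (k₁ • b₀ + k₁ • b₀) := by rw [e]
      _ = b₀ := by
          rw [show (2 * k₁ + 1 : R) = k₁ + k₁ + 1 by ring, add_smul, add_smul, one_smul]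
          abel
    have hc₁S : c₁ ∈ S := by
      rw [hc₁def]
      exact S.sub_mem (S.sub_mem hxS (S.smul_mem m₁ ha₀S)) (S.smul_mem k₁ hb₀S)
    have hc₂S : c₂ ∈ S := by
      rw [hc₂def]
      exact hSf c₁ hc₁S
    have h2c₁ : c₁ + c₁ = a₀ + b₀ := by
      calc c₁ + c₁ = (c₁ + c₂) + (c₁ - c₂) := by abel
      _ = a₀ + b₀ := by rw [hsum12, hdiff12]
    have hli2 : LinearIndependent R ![c₁, c₂] := by
      rw [LinearIndependent.pair_iff]
      intro s t hst
      have hswap : s • c₂ + t • c₁ = 0 := by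
        have h3 := congrArg f hst
        rwa [map_add, map_smul, map_smul, hfc₁, hfc₂, map_zero] at h3
      have hsum : (s + t) • a₀ = 0 := by
        calc (s + t) • a₀ = (s + t) • (c₁ + c₂) := by rw [hsum12]
        _ = (s • c₁ + t • c₂) + (s • c₂ + t • c₁) := by rw [add_smul, smul_add, smul_add]; abel
        _ = 0 := by rw [hst, hswap, add_zero]
      have hdif : (s - t) • b₀ = 0 := by
        calc (s - t) • b₀ = (s - t) • (c₁ - c₂) := by rw [hdiff12]
        _ = (s • c₁ + t • c₂) - (s • c₂ + t • c₁) := by rw [sub_smul, smul_sub, smul_sub]; abel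
        _ = 0 := by rw [hst, hswap, sub_zero]
      have h5 : s + t = 0 := by
        rcases smul_eq_zero.1 hsum with h | h
        · exact h
        · exact absurd h ha₀0
      have h6 : s - t = 0 := by
        rcases smul_eq_zero.1 hdif with h | h
        · exact h
        · exact absurd h hb₀0
      have h7 : (2 : R) * s = 0 := by linear_combination h5 + h6
      have hs0 : s = 0 := by
        rcases mul_eq_zero.1 h7 with h | h
        · exact absurd h h2
        · exact h
      refine ⟨hs0, ?_⟩
      rw [hs0, zero_add] at h5
      exact h5
    set sp2 : Submodule R N := Submodule.span R {c₁, c₂} with hsp2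
    have ha₀sp : a₀ ∈ sp2 := by
      rw [hsp2, Submodule.mem_span_pair]
      exact ⟨1, 1, by rw [one_smul, one_smul, hsum12]⟩
    have hb₀sp : b₀ ∈ sp2 := by
      rw [hsp2, Submodule.mem_span_pair]
      refine ⟨1, -1, ?_⟩
      rw [one_smul, neg_smul, one_smul, ← sub_eq_add_neg, hdiff12]
    have evenCase : ∀ y ∈ S, ∀ p q : R, y + y = (p + p) • a₀ + (q + q) • b₀ → y ∈ sp2 := by
      intro y _ p q he
      have h2sm : (2 : R) • (y - (p • a₀ + q • b₀)) = 0 := by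
        have e3 : (2 : R) • (y - (p • a₀ + q • b₀)) =
            (y + y) - ((p + p) • a₀ + (q + q) • b₀) := by
          rw [two_smul, add_smul, add_smul]; abel
        rw [e3, he, sub_self]
      have h3 : y = p • a₀ + q • b₀ := by
        rcases smul_eq_zero.1 h2sm with h | h
        · exact absurd h h2
        · rwa [sub_eq_zero] at h
      rw [h3]
      exact sp2.add_mem (sp2.smul_mem p ha₀sp) (sp2.smul_mem q hb₀sp)
    have hspan2 : S ≤ sp2 := by
      intro s hs
      have hsfS : f s ∈ S := hSf s hs
      obtain ⟨p, hp⟩ := genSp (s + f s) (Submodule.mem_inf.2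
        ⟨S.add_mem hs hsfS, (mem_Mp _).2 (by rw [map_add, hf]; abel)⟩)
      obtain ⟨q, hq⟩ := genSm (s - f s) (Submodule.mem_inf.2
        ⟨S.sub_mem hs hsfS, (mem_Mm _).2 (by rw [map_sub, hf]; abel)⟩)
      obtain ⟨p₁, hp₁ | hp₁⟩ := hpar p <;> obtain ⟨q₁, hq₁ | hq₁⟩ := hpar q
      · apply evenCase s hs p₁ q₁
        calc s + s = (s + f s) + (s - f s) := by abel
        _ = (p₁ + p₁) • a₀ + (q₁ + q₁) • b₀ := by
            rw [← hp, ← hq, hp₁, hq₁, two_mul, two_mul]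
      · exfalso
        have hw'S : s - p₁ • a₀ ∈ S := S.sub_mem hs (S.smul_mem p₁ ha₀S)
        have hw'Mm : s - p₁ • a₀ ∈ Mm := by
          apply (mem_Mm _).2
          have e5 : f (s - p₁ • a₀) - (-(s - p₁ • a₀)) = 0 := by
            rw [map_sub, map_smul, hfa₀]
            have e3 : f s - p₁ • a₀ - (-(s - p₁ • a₀)) = (s + f s) - (p₁ + p₁) • a₀ := by
              rw [add_smul]; abel
            rw [e3, ← hp, hp₁, two_mul, add_smul]
            abel
          exact sub_eq_zero.1 e5
        obtain ⟨l, hl⟩ := genSm (s - p₁ • a₀) (Submodule.mem_inf.2 ⟨hw'S, hw'Mm⟩)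
        have e6 : (q - (l + l)) • b₀ = 0 := by
          have e7 : s - f s = (s - p₁ • a₀) - f (s - p₁ • a₀) := by
            rw [map_sub, map_smul, hfa₀]; abel
          have e8 : (s - p₁ • a₀) - f (s - p₁ • a₀) = (l + l) • b₀ := by
            rw [(mem_Mm _).1 hw'Mm, ← hl, add_smul]
            abel
          have e9 : q • b₀ = (l + l) • b₀ := by rw [hq, e7, e8]
          rw [sub_smul, e9, sub_self]
        have e10 : q = l + l := by
          rcases smul_eq_zero.1 e6 with h | h
          · rw [← sub_eq_zero]; exact h
          · exact absurd h hb₀0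
        exact hodd l q₁ (by rw [two_mul, ← e10]; exact hq₁)
      · exfalso
        have hw'S : s - q₁ • b₀ ∈ S := S.sub_mem hs (S.smul_mem q₁ hb₀S)
        have hw'Mp : s - q₁ • b₀ ∈ Mp := by
          apply (mem_Mp _).2
          have e5 : f (s - q₁ • b₀) - (s - q₁ • b₀) = 0 := by
            rw [map_sub, map_smul, hfb₀, smul_neg]
            have e3 : f s - -(q₁ • b₀) - (s - q₁ • b₀) = ((q₁ + q₁) • b₀) - (s - f s) := by
              rw [add_smul]; abel
            rw [e3, ← hq, hq₁, two_mul, add_smul]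
            abel
          exact sub_eq_zero.1 e5
        obtain ⟨l, hl⟩ := genSp (s - q₁ • b₀) (Submodule.mem_inf.2 ⟨hw'S, hw'Mp⟩)
        have e6 : (p - (l + l)) • a₀ = 0 := by
          have e7 : s + f s = (s - q₁ • b₀) + f (s - q₁ • b₀) := by
            rw [map_sub, map_smul, hfb₀, smul_neg]; abel
          have e8 : (s - q₁ • b₀) + f (s - q₁ • b₀) = (l + l) • a₀ := by
            rw [(mem_Mp _).1 hw'Mp, ← hl, add_smul]
          have e9 : p • a₀ = (l + l) • a₀ := by rw [hp, e7, e8]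
          rw [sub_smul, e9, sub_self]
        have e10 : p = l + l := by
          rcases smul_eq_zero.1 e6 with h | h
          · rw [← sub_eq_zero]; exact h
          · exact absurd h ha₀0
        exact hodd l p₁ (by rw [two_mul, ← e10]; exact hp₁)
      · have htS : s - c₁ ∈ S := S.sub_mem hs hc₁S
        have ht : s - c₁ ∈ sp2 := by
          apply evenCase _ htS p₁ q₁
          calc (s - c₁) + (s - c₁) = ((s + f s) + (s - f s)) - (c₁ + c₁) := by abel
          _ = ((2 * p₁ + 1) • a₀ + (2 * q₁ + 1) • b₀) - (a₀ + b₀) := by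
              rw [h2c₁, ← hp, ← hq, hp₁, hq₁]
          _ = (p₁ + p₁) • a₀ + (q₁ + q₁) • b₀ := by
              rw [show (2 * p₁ + 1 : R) = p₁ + p₁ + 1 by ring,
                show (2 * q₁ + 1 : R) = q₁ + q₁ + 1 by ring,
                add_smul, add_smul, add_smul, add_smul, one_smul, one_smul]
              abel
        have hs' : s = (s - c₁) + c₁ := by abel
        rw [hs']
        exact sp2.add_mem ht (Submodule.subset_span (by simp))
    have hrange2 : Set.range ![c₁, c₂] = {c₁, c₂} := by
      rw [Set.pair_comm]
      simp [Matrix.range_cons, Matrix.range_empty]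
    have hspanS : Submodule.span R (Set.range ![c₁, c₂]) = S := by
      apply le_antisymm
      · rw [hrange2, Submodule.span_le]
        rintro y hy
        simp only [Set.mem_insert_iff, Set.mem_singleton_iff] at hy
        rcases hy with rfl | rfl
        · exact hc₁S
        · exact hc₂S
      · intro s hs
        rw [hrange2]
        exact hspan2 hs
    let bS : Basis Bool R S :=
      ((Basis.span hli2).map (LinearEquiv.ofEq _ _ hspanS)).reindex finTwoEquiv
    have hbSfalse : (bS false : N) = c₁ := by
      rw [show bS false = ((Basis.span hli2).map (LinearEquiv.ofEq _ _ hspanS))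
        (finTwoEquiv.symm false) from Basis.reindex_apply _ _ _]
      rw [show finTwoEquiv.symm false = 0 from rfl, Basis.map_apply]
      rw [show (((LinearEquiv.ofEq _ _ hspanS) ((Basis.span hli2) 0)) : N) =
        (((Basis.span hli2) 0 : _) : N) from rfl]
      rw [Basis.span_apply]
      rfl
    have hbStrue : (bS true : N) = c₂ := by
      rw [show bS true = ((Basis.span hli2).map (LinearEquiv.ofEq _ _ hspanS))
        (finTwoEquiv.symm true) from Basis.reindex_apply _ _ _]
      rw [show finTwoEquiv.symm true = 1 from rfl, Basis.map_apply]
      rw [show (((LinearEquiv.ofEq _ _ hspanS) ((Basis.span hli2) 1)) : N) =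
        (((Basis.span hli2) 1 : _) : N) from rfl]
      rw [Basis.span_apply]
      rfl
    let πS : N →ₗ[R] S := LinearMap.codRestrict S π hπS
    let α : N →ₗ[R] R := (bS.coord false) ∘ₗ πS
    have hαval : ∀ (m : N) (hm : m ∈ S), α m = bS.repr ⟨m, hm⟩ false := by
      intro m hm
      have h1 : πS m = ⟨m, hm⟩ := Subtype.ext (hπid m hm)
      show (bS.coord false) (πS m) = _
      rw [h1, Basis.coord_apply]
    have hαc₁ : α c₁ = 1 := by
      rw [hαval c₁ hc₁S]
      rw [show (⟨c₁, hc₁S⟩ : S) = bS false from Subtype.ext (by rw [hbSfalse])]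
      rw [Basis.repr_self]
      simp
    have hαc₂ : α c₂ = 0 := by
      rw [hαval c₂ hc₂S]
      rw [show (⟨c₂, hc₂S⟩ : S) = bS true from Subtype.ext (by rw [hbStrue])]
      rw [Basis.repr_self]
      simp
    set ρ : N →ₗ[R] N := α.smulRight c₁ + (α ∘ₗ f).smulRight c₂ with hρdef
    have hρ_apply : ∀ m, ρ m = α m • c₁ + α (f m) • c₂ := by
      intro m
      rw [hρdef]
      simp [LinearMap.smulRight_apply]
    have hρS : ∀ m, ρ m ∈ S := by
      intro m
      rw [hρ_apply]
      exact S.add_mem (S.smul_mem _ hc₁S) (S.smul_mem _ hc₂S)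
    have hρc₁ : ρ c₁ = c₁ := by
      rw [hρ_apply, hfc₁, hαc₁, hαc₂, one_smul, zero_smul, add_zero]
    have hρc₂ : ρ c₂ = c₂ := by
      rw [hρ_apply, hfc₂, hαc₂, hαc₁, one_smul, zero_smul, zero_add]
    have hρid : ∀ s ∈ S, ρ s = s := by
      intro s hs
      have hs2 : s ∈ sp2 := hspan2 hs
      rw [hsp2, Submodule.mem_span_pair] at hs2
      obtain ⟨p, q, rfl⟩ := hs2
      rw [map_add, map_smul, map_smul, hρc₁, hρc₂]
    have hρf : ∀ m, ρ (f m) = f (ρ m) := by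
      intro m
      rw [hρ_apply, hρ_apply, hf m, map_add, map_smul, map_smul, hfc₁, hfc₂]
      abel
    have hcompl : IsCompl S (LinearMap.ker ρ) := by
      constructor
      · rw [Submodule.disjoint_def]
        intro m hmS hmK
        have h1 : ρ m = 0 := hmK
        rw [← hρid m hmS, h1]
      · rw [codisjoint_iff, Submodule.eq_top_iff']
        intro m
        rw [Submodule.mem_sup]
        refine ⟨ρ m, hρS m, m - ρ m, ?_, by abel⟩
        rw [LinearMap.mem_ker, map_sub, hρid (ρ m) (hρS m), sub_self]
    have hker_f : ∀ y ∈ LinearMap.ker ρ, f y ∈ LinearMap.ker ρ := by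
      intro y hy
      rw [LinearMap.mem_ker] at hy ⊢
      rw [hρf, hy, map_zero]
    set f' : LinearMap.ker ρ →ₗ[R] LinearMap.ker ρ := f.restrict hker_f with hf'def
    have hf' : ∀ y, f' (f' y) = y := by
      intro y
      apply Subtype.ext
      rw [hf'def]
      simp only [LinearMap.restrict_apply]
      exact hf y
    have hrkK : finrank R (LinearMap.ker ρ) < n := by
      have h1 : finrank R (S × LinearMap.ker ρ) = finrank R N :=
        LinearEquiv.finrank_eq (Submodule.prodEquivOfIsCompl S (LinearMap.ker ρ) hcompl)
      rw [Module.finrank_prod, hrkS] at h1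
      omega
    obtain ⟨a, b, c, v', hv'⟩ := IH _ hrkK (LinearMap.ker ρ) f' hf' rfl
    let w : Basis (BIdx a b (c + 1)) R N :=
      ((bS.prod v').map (Submodule.prodEquivOfIsCompl S (LinearMap.ker ρ) hcompl)).reindex
        (stepEquiv a b c)
    refine ⟨a, b, c + 1, w, ?_⟩
    have hwval : ∀ j : Bool ⊕ BIdx a b c,
        w (stepEquiv a b c j) =
          Sum.elim (fun bo => (bS bo : N)) (fun j' => ((v' j' : LinearMap.ker ρ) : N)) j := by
      intro j
      rw [show w (stepEquiv a b c j) =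
        ((bS.prod v').map (Submodule.prodEquivOfIsCompl S (LinearMap.ker ρ) hcompl))
          ((stepEquiv a b c).symm (stepEquiv a b c j)) from Basis.reindex_apply _ _ _]
      rw [Equiv.symm_apply_apply]
      exact prod_basis_value _ _ hcompl bS v' j
    intro k
    obtain ⟨j, rfl⟩ := (stepEquiv a b c).surjective k
    rw [hwval, stepEquiv_perm, stepEquiv_sgn, hwval]
    rcases j with bo | j'
    · rcases bo with _ | _
      · -- false : c₁ ↦ c₂
        simp only [Sum.elim_inl, Sum.map_inl, Bool.not_false, Int.cast_one, one_smul]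
        rw [hbSfalse, hbStrue]
        exact hfc₁
      · -- true : c₂ ↦ c₁
        simp only [Sum.elim_inl, Sum.map_inl, Bool.not_true, Int.cast_one, one_smul]
        rw [hbSfalse, hbStrue]
        exact hfc₂
    · simp only [Sum.elim_inr, Sum.map_inr]
      have h1 : f ((v' j' : LinearMap.ker ρ) : N) = ((f' (v' j') : LinearMap.ker ρ) : N) := rfl
      rw [h1, hv' j']
      rfl

end Reiner

/-! ### main theorem -/

/-- **Real points of a real torus.** Let `A` be an `n×n` integer matrix with `A² = I`,
`p = rank ker(I−A)`, `q = rank ker(I+A)`, and `r = dim_{F₂} ℤⁿ/(ker(I−A)+ker(I+A))`.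
Then the fixed subgroup of `σ_A` in `(ℂˣ)ⁿ` is isomorphic, as a topological group, to
`(ℝˣ)^{p−r} × (S¹)^{q−r} × (ℂˣ)^r`. -/
theorem stmt_2 (n p q r : ℕ) (A : Matrix (Fin n) (Fin n) ℤ) (hA : A * A = 1)
    (hp : Module.finrank ℤ (LinearMap.ker (Matrix.mulVecLin (1 - A))) = p)
    (hq : Module.finrank ℤ (LinearMap.ker (Matrix.mulVecLin (1 + A))) = q)
    (hr : Nat.card ((Fin n → ℤ) ⧸ (LinearMap.ker (Matrix.mulVecLin (1 - A)) ⊔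
      LinearMap.ker (Matrix.mulVecLin (1 + A)))) = 2 ^ r) :
    ∃ e : fixedSubgroup (sigmaMat A) ≃*
        ((Fin (p - r) → ℝˣ) × (Fin (q - r) → Circle) × (Fin r → ℂˣ)),
      Continuous e ∧ Continuous e.symm := by
  classical
  have hff : ∀ x, (Matrix.mulVecLin A) ((Matrix.mulVecLin A) x) = x := by
    intro x
    rw [← LinearMap.comp_apply, ← Matrix.mulVecLin_mul, hA, Matrix.mulVecLin_one,
      LinearMap.id_apply]
  obtain ⟨a, b, c, v, hv⟩ := reinerR ℤ (by norm_num)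
    (fun x => by
      rcases Int.even_or_odd x with ⟨s, hs⟩ | ⟨s, hs⟩
      · exact ⟨s, Or.inl (by omega)⟩
      · exact ⟨s, Or.inr (by omega)⟩)
    (fun s t h => by omega)
    (Module.finrank ℤ (Fin n → ℤ)) (Fin n → ℤ) (Matrix.mulVecLin A) hff rfl
  have hv' : ∀ j, Matrix.mulVecLin A (v j) = (bSgn j : ℤ) • v (bPerm j) := by
    intro j
    have h1 := hv j
    rwa [Int.cast_id] at h1
  set B0 : Module.Basis (Fin n) ℤ (Fin n → ℤ) := Pi.basisFun ℤ (Fin n) with hB0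
  set E : Matrix (Fin n) (BIdx a b c) ℤ := B0.toMatrix ⇑v with hE
  set E' : Matrix (BIdx a b c) (Fin n) ℤ := v.toMatrix ⇑B0 with hE'
  have hEE' : E * E' = 1 := B0.toMatrix_mul_toMatrix_flip v
  have hE'E : E' * E = 1 := v.toMatrix_mul_toMatrix_flip B0
  have hEentry : ∀ i j, E i j = v j i := by
    intro i j
    rw [hE, Module.Basis.toMatrix_apply, hB0]
    simp
  have hAE : A * E = E * Dmat a b c := by
    ext i j
    rw [Matrix.mul_apply, Matrix.mul_apply]
    have hL : ∑ k, A i k * E k j = bSgn j * v (bPerm j) i := by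
      calc ∑ k, A i k * E k j = ∑ k, A i k * v j k := by
            refine Finset.sum_congr rfl fun k _ => ?_
            rw [hEentry]
      _ = Matrix.mulVecLin A (v j) i := rfl
      _ = ((bSgn j : ℤ) • v (bPerm j)) i := by rw [hv' j]
      _ = bSgn j * v (bPerm j) i := by rw [Pi.smul_apply, smul_eq_mul]
    have hR : ∑ k, E i k * Dmat a b c k j = bSgn j * v (bPerm j) i := by
      rw [Finset.sum_eq_single (bPerm j)]
      · rw [hEentry, Dmat, if_pos (bPerm_invol j).symm, bSgn_bPerm, mul_comm]
      · intro k _ hk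
        rw [Dmat, if_neg, mul_zero]
        intro hcon
        apply hk
        rw [hcon, bPerm_invol]
      · intro h; exact absurd (Finset.mem_univ _) h
    rw [hL, hR]
  set ℒ : (Fin n → ℤ) ≃ₗ[ℤ] (BIdx a b c → ℤ) :=
    LinearEquiv.ofLinear (Matrix.mulVecLin E') (Matrix.mulVecLin E)
      (by rw [← Matrix.mulVecLin_mul, hE'E, Matrix.mulVecLin_one])
      (by rw [← Matrix.mulVecLin_mul, hEE', Matrix.mulVecLin_one]) with hL
  have hsub : (1 - A) * E = E * (1 - Dmat a b c) := by
    rw [Matrix.sub_mul, Matrix.mul_sub, Matrix.one_mul, Matrix.mul_one, hAE]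
  have hadd : (1 + A) * E = E * (1 + Dmat a b c) := by
    rw [Matrix.add_mul, Matrix.mul_add, Matrix.one_mul, Matrix.mul_one, hAE]
  have hmap1 : Submodule.map (ℒ : (Fin n → ℤ) →ₗ[ℤ] (BIdx a b c → ℤ))
      (LinearMap.ker (Matrix.mulVecLin (1 - A))) =
      LinearMap.ker (Matrix.mulVecLin (1 - Dmat a b c)) :=
    map_ker_matrix E E' hEE' hE'E _ _ hsub
  have hmap2 : Submodule.map (ℒ : (Fin n → ℤ) →ₗ[ℤ] (BIdx a b c → ℤ))
      (LinearMap.ker (Matrix.mulVecLin (1 + A))) =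
      LinearMap.ker (Matrix.mulVecLin (1 + Dmat a b c)) :=
    map_ker_matrix E E' hEE' hE'E _ _ hadd
  have hpac : p = a + c := by
    rw [← hp, ← LinearEquiv.finrank_map_eq ℒ (LinearMap.ker (Matrix.mulVecLin (1 - A))),
      hmap1, finrank_ker_sub_Dmat]
  have hqbc : q = b + c := by
    rw [← hq, ← LinearEquiv.finrank_map_eq ℒ (LinearMap.ker (Matrix.mulVecLin (1 + A))),
      hmap2, finrank_ker_add_Dmat]
  have hrc : r = c := by
    have hcard : Nat.card ((Fin n → ℤ) ⧸ (LinearMap.ker (Matrix.mulVecLin (1 - A)) ⊔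
        LinearMap.ker (Matrix.mulVecLin (1 + A)))) = 2 ^ c := by
      have hmaps : Submodule.map (ℒ : (Fin n → ℤ) →ₗ[ℤ] (BIdx a b c → ℤ))
          (LinearMap.ker (Matrix.mulVecLin (1 - A)) ⊔ LinearMap.ker (Matrix.mulVecLin (1 + A))) =
          LinearMap.ker (Matrix.mulVecLin (1 - Dmat a b c)) ⊔
            LinearMap.ker (Matrix.mulVecLin (1 + Dmat a b c)) := by
        rw [Submodule.map_sup, hmap1, hmap2]
      have hqe := Submodule.Quotient.equiv _ _ ℒ hmaps
      rw [Nat.card_congr hqe.toEquiv, card_quot_Dmat]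
    rw [hcard] at hr
    exact (Nat.pow_right_injective (by norm_num) hr.symm)
  have hpr : p - r = a := by omega
  have hqr : q - r = b := by omega
  rw [hpr, hqr, hrc]
  refine ⟨(fixedMx E E' hEE' hE'E A (Dmat a b c) hAE).trans (blockEquiv a b c).symm, ?_, ?_⟩
  · exact (continuous_blockEquiv_symm a b c).comp
      (continuous_fixedMx E E' hEE' hE'E A (Dmat a b c) hAE).1
  · exact (continuous_fixedMx E E' hEE' hE'E A (Dmat a b c) hAE).2.comp
      (continuous_blockEquiv a b c)
end

section
/- Let (N, τ) be a ℤ[τ]-lattice. Regard the multiplicative group ℂˣ as a ℤ-module (written additively), form the ℤ-module T = N ⊗_ℤ ℂˣ, and equip T with the involution σ = τ ⊗ conj, where conj is complex conjugation on ℂˣ. Then there are group isomorphisms ker(1+σ)/im(1−σ) ≅ ker(1+τ)/im(1−τ) and ker(1−σ)/im(1+σ) ≅ ker(1−τ)/im(1+τ); that is, H^k(ℤ/2; N ⊗_ℤ ℂˣ) ≅ H^k(ℤ/2; N) for every k ≥ 1. -/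
/-- The "cohomology" quotient `ker f / im g` (intersected with `ker f`) of an abelian
group equipped with two endomorphisms; for an involution `τ`, taking `f = 1+τ`, `g = 1−τ`
gives `H¹(ℤ/2;·)` and `f = 1−τ`, `g = 1+τ` gives `H²(ℤ/2;·)`. -/
abbrev Hq {A : Type*} [AddCommGroup A] (f g : A →+ A) :=
  ↥f.ker ⧸ (g.range.addSubgroupOf f.ker)

/-- Complex conjugation on `ℂˣ`, viewed as a ℤ-linear endomorphism of
the additively-written group `Additive ℂˣ`. -/
noncomputable def conjAddHom : Additive ℂˣ →ₗ[ℤ] Additive ℂˣ :=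
  AddMonoidHom.toIntLinearMap
    (MonoidHom.toAdditive (Units.map (starRingEnd ℂ).toMonoidHom))

open Complex TensorProduct LinearMap

noncomputable def expHom : ℂ →ₗ[ℤ] Additive ℂˣ :=
  AddMonoidHom.toIntLinearMap
    { toFun := fun z => Additive.ofMul
        (Units.mk0 (Complex.exp (Real.pi * Complex.I * z)) (Complex.exp_ne_zero _))
      map_zero' := by
        have h : (Units.mk0 (Complex.exp (Real.pi * Complex.I * 0)) (Complex.exp_ne_zero _)) = 1 := by
          ext; simp
        rw [h]; rfl
      map_add' := fun a b => by
        have : Units.mk0 (Complex.exp (Real.pi * Complex.I * (a + b))) (Complex.exp_ne_zero _)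
            = Units.mk0 (Complex.exp (Real.pi * Complex.I * a)) (Complex.exp_ne_zero _) *
              Units.mk0 (Complex.exp (Real.pi * Complex.I * b)) (Complex.exp_ne_zero _) := by
          ext
          simp [mul_add, Complex.exp_add]
        rw [this, ofMul_mul] }

lemma expHom_apply (z : ℂ) :
    expHom z = Additive.ofMul
      (Units.mk0 (Complex.exp (Real.pi * Complex.I * z)) (Complex.exp_ne_zero _)) := rfl

lemma piI_ne_zero : (Real.pi : ℂ) * Complex.I ≠ 0 := by
  simp [Complex.ofReal_ne_zero, Real.pi_ne_zero, Complex.I_ne_zero]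

lemma expHom_surjective : Function.Surjective expHom := by
  intro u
  set v : ℂˣ := Additive.toMul u
  refine ⟨Complex.log v / (Real.pi * Complex.I), ?_⟩
  rw [expHom_apply]
  have hv : (v : ℂ) ≠ 0 := v.ne_zero
  have h2 : (Real.pi : ℂ) * Complex.I * (Complex.log v / (Real.pi * Complex.I)) = Complex.log v := by
    rw [mul_comm ((Real.pi : ℂ) * Complex.I)]
    exact div_mul_cancel₀ _ piI_ne_zero
  rw [h2]
  have : Units.mk0 (Complex.exp (Complex.log (v : ℂ))) (Complex.exp_ne_zero _) = v := by
    ext; simp [Complex.exp_log hv]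
  rw [this]
  rfl

lemma expHom_eq_zero_iff (z : ℂ) : expHom z = 0 ↔ ∃ n : ℤ, z = n * 2 := by
  rw [expHom_apply]
  rw [show (0 : Additive ℂˣ) = Additive.ofMul (1 : ℂˣ) from rfl]
  rw [Additive.ofMul.apply_eq_iff_eq]
  rw [Units.ext_iff]
  simp only [Units.val_mk0, Units.val_one]
  rw [Complex.exp_eq_one_iff]
  constructor
  · rintro ⟨n, hn⟩
    refine ⟨n, ?_⟩
    apply mul_left_cancel₀ piI_ne_zero
    rw [hn]; ring
  · rintro ⟨n, hn⟩
    exact ⟨n, by rw [hn]; ring⟩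

noncomputable def negConj : ℂ →ₗ[ℤ] ℂ :=
  -((starRingEnd ℂ).toAddMonoidHom.toIntLinearMap)

lemma negConj_apply (z : ℂ) : negConj z = -((starRingEnd ℂ) z) := rfl

lemma conjAddHom_apply (u : ℂˣ) :
    conjAddHom (Additive.ofMul u) =
      Additive.ofMul (Units.map (starRingEnd ℂ).toMonoidHom u) := rfl

lemma expHom_negConj (z : ℂ) : expHom (negConj z) = conjAddHom (expHom z) := by
  rw [negConj_apply, expHom_apply, expHom_apply, conjAddHom_apply]
  congr 1
  ext
  simp only [Units.val_mk0, Units.coe_map, RingHom.toMonoidHom_eq_coe, MonoidHom.coe_coe]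
  rw [← Complex.exp_conj]
  congr 1
  simp only [map_mul, Complex.conj_I, Complex.conj_ofReal]
  ring

lemma expHom_one : expHom 1 = Additive.ofMul ((-1 : ℂˣ)) := by
  rw [expHom_apply]
  congr 1
  ext
  simp [Complex.exp_pi_mul_I]

noncomputable def dHom : ℤ →ₗ[ℤ] ℂ := LinearMap.toSpanSingleton ℤ ℂ 2

lemma dHom_apply (n : ℤ) : dHom n = (n : ℂ) * 2 := by
  simp [dHom, LinearMap.toSpanSingleton_apply, zsmul_eq_mul]

lemma exact_d_exp : Function.Exact dHom expHom := by
  intro z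
  rw [expHom_eq_zero_iff]
  constructor
  · rintro ⟨n, hn⟩; exact ⟨n, by rw [dHom_apply, ← hn]⟩
  · rintro ⟨n, hn⟩; exact ⟨n, by rw [← hn, dHom_apply]⟩

section MasterSection

attribute [local instance 10000] TensorProduct.instModule

lemma master (N : Type*) [AddCommGroup N] [Module ℤ N] [Module.Free ℤ N]
    (τ : N →ₗ[ℤ] N) (hτ : ∀ x, τ (τ x) = x) :
    Nonempty
      (Hq (LinearMap.toAddMonoidHom
            (1 + TensorProduct.map τ conjAddHom :
              Module.End ℤ (TensorProduct ℤ N (Additive ℂˣ))))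
          (LinearMap.toAddMonoidHom
            (1 - TensorProduct.map τ conjAddHom :
              Module.End ℤ (TensorProduct ℤ N (Additive ℂˣ))))
        ≃+ Hq (LinearMap.toAddMonoidHom (1 + τ : Module.End ℤ N))
            (LinearMap.toAddMonoidHom (1 - τ : Module.End ℤ N))) := by
  classical
  set σ := TensorProduct.map τ conjAddHom with hσ
  set σV := TensorProduct.map τ negConj with hσV
  set E := LinearMap.lTensor N expHom with hE
  set ι := (LinearMap.lTensor N (LinearMap.toSpanSingleton ℤ ℂ 1)) ∘ₗ
    (TensorProduct.rid ℤ N).symm.toLinearMap with hι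
  set φ := E ∘ₗ ι with hφ
  have hιn : ∀ n : N, ι n = n ⊗ₜ[ℤ] (1 : ℂ) := by
    intro n
    simp [hι, TensorProduct.rid_symm_apply, LinearMap.toSpanSingleton_apply]
  have hEt : ∀ (n : N) (z : ℂ), E (n ⊗ₜ[ℤ] z) = n ⊗ₜ[ℤ] expHom z := by
    intro n z; simp [hE]
  have h1 : ∀ v : TensorProduct ℤ N ℂ, σ (E v) = E (σV v) := by
    have h : σ ∘ₗ E = E ∘ₗ σV := by
      apply TensorProduct.ext'
      intro n z
      simp [hE, hσ, hσV, expHom_negConj]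
    intro v
    exact LinearMap.congr_fun h v
  have h2 : ∀ v : TensorProduct ℤ N ℂ, σV (σV v) = v := by
    have h : σV ∘ₗ σV = LinearMap.id := by
      apply TensorProduct.ext'
      intro n z
      simp [hσV, negConj_apply, hτ]
    intro v
    exact LinearMap.congr_fun h v
  have h3 : ∀ n : N, σV (ι n) = - ι (τ n) := by
    intro n
    rw [hιn, hιn]
    simp [hσV, negConj_apply, ← TensorProduct.tmul_neg]
  have h4 : Function.Surjective E := by
    rw [hE]
    exact LinearMap.lTensor_surjective N expHom_surjective
  have h5 : ∀ v : TensorProduct ℤ N ℂ, E v = 0 ↔ ∃ m : N, m ⊗ₜ[ℤ] (2 : ℂ) = v := by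
    intro v
    have hex : Function.Exact (LinearMap.lTensor N dHom) (LinearMap.lTensor N expHom) :=
      Module.Flat.lTensor_exact N exact_d_exp
    rw [hE, hex v]
    constructor
    · rintro ⟨u, hu⟩
      refine ⟨TensorProduct.rid ℤ N u, ?_⟩
      have hu1 : u = (TensorProduct.rid ℤ N u) ⊗ₜ[ℤ] (1 : ℤ) := by
        have h := (TensorProduct.rid ℤ N).symm_apply_apply u
        rw [← TensorProduct.rid_symm_apply]
        exact h.symm
      rw [← hu, hu1]
      have : dHom 1 = (2 : ℂ) := by rw [dHom_apply]; norm_num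
      simp [this]
      exact congrArg (· ⊗ₜ[ℤ] (2 : ℂ)) (@MulAction.one_smul ℤ N _ (‹Module ℤ N›).toMulAction _)
    · rintro ⟨m, hm⟩
      refine ⟨m ⊗ₜ[ℤ] (1 : ℤ), ?_⟩
      rw [← hm]
      have : dHom 1 = (2 : ℂ) := by rw [dHom_apply]; norm_num
      simp [this]
  have h6 : Function.Injective ι := by
    have hj : Function.Injective (LinearMap.toSpanSingleton ℤ ℂ 1) := by
      intro a b hab
      simpa [LinearMap.toSpanSingleton_apply, zsmul_eq_mul] using hab
    have hinj : Function.Injective (LinearMap.lTensor N (LinearMap.toSpanSingleton ℤ ℂ 1)) :=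
      Module.Flat.lTensor_preserves_injective_linearMap _ hj
    intro a b hab
    rw [hι] at hab
    exact (TensorProduct.rid ℤ N).symm.injective (hinj hab)
  have hφn : ∀ n : N, φ n = E (ι n) := fun n => rfl
  have htwo : ∀ x : N, ι x + ι x = x ⊗ₜ[ℤ] (2 : ℂ) := by
    intro x
    rw [hιn, ← TensorProduct.tmul_add]
    norm_num
  have hφ2 : ∀ m : N, φ m + φ m = 0 := by
    intro m
    rw [hφn, ← map_add, htwo]
    exact (h5 _).mpr ⟨m, rfl⟩
  have hφτ : ∀ n : N, σ (φ n) = φ (τ n) := by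
    intro n
    rw [hφn, h1, h3, map_neg, ← hφn]
    exact neg_eq_of_add_eq_zero_left (hφ2 (τ n))
  have hhalf : ∀ v : TensorProduct ℤ N ℂ, ∃ w, w + w = v := by
    intro v
    induction v using TensorProduct.induction_on with
    | zero => exact ⟨0, by simp⟩
    | tmul n z => exact ⟨n ⊗ₜ[ℤ] (z / 2), by rw [← TensorProduct.tmul_add, add_halves]⟩
    | add a b ha hb =>
      obtain ⟨wa, hwa⟩ := ha
      obtain ⟨wb, hwb⟩ := hb
      exact ⟨wa + wb, by rw [← hwa, ← hwb]; abel⟩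
  have b := Module.Free.chooseBasis ℤ N
  have htfN : ∀ x : N, x + x = 0 → x = 0 := by
    intro x hx
    have hx' : b.repr x + b.repr x = 0 := by rw [← map_add, hx, map_zero]
    have hr0 : b.repr x = 0 := by
      ext i
      have hi := DFunLike.congr_fun hx' i
      simp only [Finsupp.add_apply, Finsupp.coe_zero, Pi.zero_apply] at hi ⊢
      omega
    have := congrArg b.repr.symm hr0
    simpa using this
  have htfV : ∀ v : TensorProduct ℤ N ℂ, v + v = 0 → v = 0 := by
    let g := (TensorProduct.congr b.repr (LinearEquiv.refl ℤ ℂ)).trans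
      (TensorProduct.finsuppScalarLeft ℤ ℂ (Module.Free.ChooseBasisIndex ℤ N))
    intro v hv
    have hgv : g v + g v = 0 := by rw [← map_add, hv, map_zero]
    have hg0 : g v = 0 := by
      ext i
      have hi : g v i + g v i = 0 := by
        have := DFunLike.congr_fun hgv i
        simpa using this
      have h2 : (2 : ℂ) * g v i = 0 := by rw [two_mul]; exact hi
      rcases mul_eq_zero.mp h2 with h | h
      · norm_num at h
      · simpa using h
    have := congrArg g.symm hg0
    simpa using this
  -- surjectivity at the element level
  have hsurj : ∀ t : TensorProduct ℤ N (Additive ℂˣ), t + σ t = 0 →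
      ∃ n : N, (n + τ n = 0) ∧ ∃ s, t = φ n + (s - σ s) := by
    intro t ht
    obtain ⟨z, hz⟩ := h4 t
    have hz0 : E (z + σV z) = 0 := by
      rw [map_add, hz, ← h1, hz, ht]
    obtain ⟨m, hm⟩ := (h5 _).mp hz0
    rw [← htwo] at hm
    -- hm : ι m + ι m = z + σV z
    have happ : σV z + z = -ι (τ m) + -ι (τ m) := by
      have hc := congrArg σV hm
      rw [map_add, map_add, h2, h3] at hc
      exact hc.symm
    have he : ι m + ι m = -ι (τ m) + -ι (τ m) := by
      rw [hm, add_comm]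
      exact happ
    have hker : m + τ m = 0 := by
      apply htfN
      apply h6
      rw [map_add, map_add, map_zero]
      have : ι m + ι (τ m) + (ι m + ι (τ m)) = (ι m + ι m) + (ι (τ m) + ι (τ m)) := by abel
      rw [this, he]
      abel
    obtain ⟨w, hw⟩ := hhalf z
    have hσVz : σV z = (ι m + ι m) - z := by rw [hm]; abel
    have hσVw : σV w + σV w = σV z := by rw [← map_add, hw]
    have hD : (w - σV w + ι m) + (w - σV w + ι m) = z + z := by
      have hr : (w - σV w + ι m) + (w - σV w + ι m)
          = (w + w) - (σV w + σV w) + (ι m + ι m) := by abel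
      rw [hr, hw, hσVw, hσVz]
      abel
    have hDz : w - σV w + ι m = z := by
      have h0 : ((w - σV w + ι m) - z) + ((w - σV w + ι m) - z) = 0 := by
        have : ((w - σV w + ι m) - z) + ((w - σV w + ι m) - z)
            = ((w - σV w + ι m) + (w - σV w + ι m)) - (z + z) := by abel
        rw [this, hD]
        abel
      have := htfV _ h0
      exact sub_eq_zero.mp this
    refine ⟨m, hker, E w, ?_⟩
    have hEz : E (w - σV w + ι m) = t := by rw [hDz, hz]
    rw [map_add, map_sub, ← h1, ← hφn] at hEz
    rw [← hEz]
    abel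
  -- injectivity at the element level
  have hinj : ∀ n : N, n + τ n = 0 → (∃ s, s - σ s = φ n) → ∃ m : N, m - τ m = n := by
    intro n hn ⟨s, hs⟩
    obtain ⟨z, hz⟩ := h4 s
    have hz0 : E (ι n - (z - σV z)) = 0 := by
      rw [map_sub, map_sub, ← h1, hz, ← hφn, hs]
      abel
    obtain ⟨m, hm⟩ := (h5 _).mp hz0
    rw [← htwo] at hm
    -- hm : ι m + ι m = ι n - (z - σV z)
    have happ : σV (ι n - (z - σV z)) = -ι (τ n) - σV z + z := by
      rw [map_sub, map_sub, h2, h3]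
      abel
    have hsum : ι n - ι (τ n) = (ι m + ι m) + (-ι (τ m) + -ι (τ m)) := by
      have hc := congrArg σV hm
      rw [happ, map_add, h3] at hc
      -- hc : -ι (τ n) - σV z + z = -ι (τ m) + -ι (τ m)
      have : ι n - ι (τ n) = (ι n - (z - σV z)) + (-ι (τ n) - σV z + z) := by abel
      rw [this, ← hm, hc]
    have heq : n - τ n = (m - τ m) + (m - τ m) := by
      apply h6
      rw [map_sub, map_add, map_sub]
      rw [hsum]
      abel
    have hτn : τ n = -n := by
      rw [eq_neg_iff_add_eq_zero, add_comm]
      exact hn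
    rw [hτn, sub_neg_eq_add] at heq
    have h0 : (n - (m - τ m)) + (n - (m - τ m)) = 0 := by
      have hr : (n - (m - τ m)) + (n - (m - τ m)) = (n + n) - ((m - τ m) + (m - τ m)) := by abel
      rw [hr, heq, sub_self]
    exact ⟨m, (sub_eq_zero.mp (htfN _ h0)).symm⟩
  -- the quotient-level map
  set fT := LinearMap.toAddMonoidHom
    (1 + σ : Module.End ℤ (TensorProduct ℤ N (Additive ℂˣ))) with hfT
  set gT := LinearMap.toAddMonoidHom
    (1 - σ : Module.End ℤ (TensorProduct ℤ N (Additive ℂˣ))) with hgT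
  set fN := LinearMap.toAddMonoidHom (1 + τ : Module.End ℤ N) with hfN
  set gN := LinearMap.toAddMonoidHom (1 - τ : Module.End ℤ N) with hgN
  have hfTa : ∀ t, fT t = t + σ t := by
    intro t; simp [hfT, LinearMap.add_apply]
  have hgTa : ∀ t, gT t = t - σ t := by
    intro t; simp [hgT, LinearMap.sub_apply]
  have hfNa : ∀ x, fN x = x + τ x := by
    intro x; simp [hfN, LinearMap.add_apply]
  have hgNa : ∀ x, gN x = x - τ x := by
    intro x; simp [hgN, LinearMap.sub_apply]
  have hker : ∀ x : N, fN x = 0 → fT (φ x) = 0 := by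
    intro x hx
    rw [hfTa, hφτ, ← map_add, ← hfNa, hx, map_zero]
  let φ' : fN.ker →+ fT.ker :=
    AddMonoidHom.codRestrict ((φ.toAddMonoidHom).comp fN.ker.subtype) fT.ker
      (fun x => by
        rw [AddMonoidHom.mem_ker]
        exact hker x.1 x.2)
  have hφ'c : ∀ x : fN.ker, ((φ' x : fT.ker) : TensorProduct ℤ N (Additive ℂˣ)) = φ x.1 := by
    intro x; rfl
  have hle : (gN.range.addSubgroupOf fN.ker) ≤ (gT.range.addSubgroupOf fT.ker).comap φ' := by
    intro x hx
    rw [AddSubgroup.mem_addSubgroupOf] at hx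
    obtain ⟨m, hm⟩ := hx
    rw [AddSubgroup.mem_comap, AddSubgroup.mem_addSubgroupOf, hφ'c]
    refine ⟨φ m, ?_⟩
    rw [hgTa, hφτ, ← map_sub, ← hgNa, hm]
  let ψ : Hq fN gN →+ Hq fT gT := QuotientAddGroup.map _ _ φ' hle
  have hψinj : Function.Injective ψ := by
    rw [injective_iff_map_eq_zero]
    intro a
    induction a using QuotientAddGroup.induction_on with
    | H x =>
      intro ha
      have hmk : ψ ((x : fN.ker) : Hq fN gN) = ((φ' x : fT.ker) : Hq fT gT) :=
        QuotientAddGroup.map_mk _ _ _ _ _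
      rw [hmk, QuotientAddGroup.eq_zero_iff, AddSubgroup.mem_addSubgroupOf, hφ'c] at ha
      obtain ⟨s, hs⟩ := ha
      rw [hgTa] at hs
      have hx : x.1 + τ x.1 = 0 := by rw [← hfNa]; exact x.2
      obtain ⟨m, hm⟩ := hinj x.1 hx ⟨s, hs⟩
      rw [QuotientAddGroup.eq_zero_iff, AddSubgroup.mem_addSubgroupOf]
      exact ⟨m, by rw [hgNa]; exact hm⟩
  have hψsurj : Function.Surjective ψ := by
    intro bq
    induction bq using QuotientAddGroup.induction_on with
    | H t =>
      have ht : t.1 + σ t.1 = 0 := by rw [← hfTa]; exact t.2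
      obtain ⟨n, hn, s, hts⟩ := hsurj t.1 ht
      have hnker : n ∈ fN.ker := by
        rw [AddMonoidHom.mem_ker, hfNa]
        exact hn
      refine ⟨((⟨n, hnker⟩ : fN.ker) : Hq fN gN), ?_⟩
      have hmk : ψ (((⟨n, hnker⟩ : fN.ker) : Hq fN gN))
          = ((φ' ⟨n, hnker⟩ : fT.ker) : Hq fT gT) :=
        QuotientAddGroup.map_mk _ _ _ _ _
      rw [hmk]
      rw [QuotientAddGroup.eq]
      rw [AddSubgroup.mem_addSubgroupOf]
      refine ⟨s, ?_⟩
      rw [hgTa]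
      have : ((-(φ' ⟨n, hnker⟩) + t : fT.ker) : TensorProduct ℤ N (Additive ℂˣ))
          = -(φ n) + t.1 := by
        rw [AddSubgroup.coe_add, AddSubgroup.coe_neg, hφ'c]
      rw [this, hts]
      abel
  exact ⟨(AddEquiv.ofBijective ψ ⟨hψinj, hψsurj⟩).symm⟩

lemma master2 (N : Type*) [AddCommGroup N] [Module ℤ N] [Module.Free ℤ N]
    (τ : N →ₗ[ℤ] N) (hτ : ∀ x, τ (τ x) = x) :
    Nonempty
      (Hq (LinearMap.toAddMonoidHom
            (1 - TensorProduct.map τ conjAddHom :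
              Module.End ℤ (TensorProduct ℤ N (Additive ℂˣ))))
          (LinearMap.toAddMonoidHom
            (1 + TensorProduct.map τ conjAddHom :
              Module.End ℤ (TensorProduct ℤ N (Additive ℂˣ))))
        ≃+ Hq (LinearMap.toAddMonoidHom (1 - τ : Module.End ℤ N))
            (LinearMap.toAddMonoidHom (1 + τ : Module.End ℤ N))) := by
  have hτ' : ∀ x, (-τ) ((-τ) x) = x := by intro x; simp [hτ]
  have key := master N (-τ) hτ'
  have hmap : (TensorProduct.map (-τ) conjAddHom) = -(TensorProduct.map τ conjAddHom) := by
    apply TensorProduct.ext'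
    intro n u
    simp [TensorProduct.neg_tmul]
  rw [hmap] at key
  rw [show (1 + -(TensorProduct.map τ conjAddHom) :
        Module.End ℤ (TensorProduct ℤ N (Additive ℂˣ)))
      = 1 - TensorProduct.map τ conjAddHom from by rw [sub_eq_add_neg]] at key
  rw [show (1 - -(TensorProduct.map τ conjAddHom) :
        Module.End ℤ (TensorProduct ℤ N (Additive ℂˣ)))
      = 1 + TensorProduct.map τ conjAddHom from by rw [sub_neg_eq_add]] at key
  rw [show (1 + -τ : Module.End ℤ N) = 1 - τ from by rw [sub_eq_add_neg]] at key
  rw [show (1 - -τ : Module.End ℤ N) = 1 + τ from by rw [sub_neg_eq_add]] at key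
  exact key

end MasterSection

/-- **Group cohomology of a real torus.** For a ℤ[τ]-lattice `(N, τ)`, let
`T = N ⊗_ℤ ℂˣ` (with `ℂˣ` written additively) and `σ = τ ⊗ conj`. Then
`ker(1+σ)/im(1−σ) ≅ ker(1+τ)/im(1−τ)` and `ker(1−σ)/im(1+σ) ≅ ker(1−τ)/im(1+τ)`,
i.e. `H^k(ℤ/2; N ⊗ ℂˣ) ≅ H^k(ℤ/2; N)` for every `k ≥ 1`. -/
theorem stmt_3 (N : Type*) [AddCommGroup N] [Module ℤ N]
    [Module.Free ℤ N] [Module.Finite ℤ N]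
    (τ : N →ₗ[ℤ] N) (hτ : ∀ x, τ (τ x) = x) :
    Nonempty
      (Hq (LinearMap.toAddMonoidHom
            (1 + TensorProduct.map τ conjAddHom :
              Module.End ℤ (TensorProduct ℤ N (Additive ℂˣ))))
          (LinearMap.toAddMonoidHom
            (1 - TensorProduct.map τ conjAddHom :
              Module.End ℤ (TensorProduct ℤ N (Additive ℂˣ))))
        ≃+ Hq (LinearMap.toAddMonoidHom (1 + τ : Module.End ℤ N))
            (LinearMap.toAddMonoidHom (1 - τ : Module.End ℤ N))) ∧
    Nonempty
      (Hq (LinearMap.toAddMonoidHom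
            (1 - TensorProduct.map τ conjAddHom :
              Module.End ℤ (TensorProduct ℤ N (Additive ℂˣ))))
          (LinearMap.toAddMonoidHom
            (1 + TensorProduct.map τ conjAddHom :
              Module.End ℤ (TensorProduct ℤ N (Additive ℂˣ))))
        ≃+ Hq (LinearMap.toAddMonoidHom (1 - τ : Module.End ℤ N))
            (LinearMap.toAddMonoidHom (1 + τ : Module.End ℤ N))) := by
  constructor
  · exact master N τ hτ
  · exact master2 N τ hτ
end

section
/- Let p, q be natural numbers and μ : ℤ^q → ℤ^p a ℤ-linear map. Define τ : ℤ^p ⊕ ℤ^q → ℤ^p ⊕ ℤ^q by τ(x, t) = (x + μ(t), −t). Then τ is an involution, ker(1−τ) = ℤ^p ⊕ 0, and the winding number of the ℤ[τ]-lattice (ℤ^p ⊕ ℤ^q, τ), i.e. dim_{F₂} (ℤ^p ⊕ ℤ^q)/(ker(1−τ) + ker(1+τ)), equals the rank of the induced F₂-linear map μ ⊗ F₂ : F₂^q → F₂^p. -/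
/-- **Winding number of a twisted product.** Let `μ : ℤ^q → ℤ^p` be ℤ-linear and let
`τ(x, t) = (x + μ(t), −t)` on `ℤ^p ⊕ ℤ^q`. Then `τ` is an involution,
`ker(1−τ) = ℤ^p ⊕ 0`, and the winding number
`dim_{F₂} (ℤ^p ⊕ ℤ^q)/(ker(1−τ)+ker(1+τ))` equals the rank of `μ ⊗ F₂ : F₂^q → F₂^p`. -/
theorem stmt_11 (p q : ℕ) (μ : (Fin q → ℤ) →ₗ[ℤ] (Fin p → ℤ))
    (τ : ((Fin p → ℤ) × (Fin q → ℤ)) →ₗ[ℤ] ((Fin p → ℤ) × (Fin q → ℤ)))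
    (hτ : ∀ (x : Fin p → ℤ) (t : Fin q → ℤ), τ (x, t) = (x + μ t, -t)) :
    (∀ v, τ (τ v) = v) ∧
    LinearMap.ker (1 - τ : Module.End ℤ ((Fin p → ℤ) × (Fin q → ℤ))) =
      Submodule.prod ⊤ ⊥ ∧
    (∀ μ₂ : (Fin q → ZMod 2) →ₗ[ZMod 2] (Fin p → ZMod 2),
      (∀ t : Fin q → ℤ, μ₂ (fun i => ((t i : ℤ) : ZMod 2)) = fun j => ((μ t j : ℤ) : ZMod 2)) →
      Nat.card (((Fin p → ℤ) × (Fin q → ℤ)) ⧸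
        (LinearMap.ker (1 - τ : Module.End ℤ ((Fin p → ℤ) × (Fin q → ℤ))) ⊔
          LinearMap.ker (1 + τ : Module.End ℤ ((Fin p → ℤ) × (Fin q → ℤ))))) =
        2 ^ Module.finrank (ZMod 2) (LinearMap.range μ₂)) := by
  refine ⟨?_, ?_, ?_⟩
  · intro v
    obtain ⟨x, t⟩ := v
    rw [hτ, hτ]
    simp
  · ext ⟨x, t⟩
    simp only [LinearMap.mem_ker, LinearMap.sub_apply, Module.End.one_apply, hτ,
      Submodule.mem_prod, Submodule.mem_top, Submodule.mem_bot, true_and, Prod.ext_iff,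
      Prod.mk_sub_mk, Prod.fst_zero, Prod.snd_zero]
    constructor
    · rintro ⟨h1, h2⟩
      funext i
      have := congrFun h2 i
      simp only [Pi.sub_apply, Pi.neg_apply, Pi.zero_apply] at this ⊢
      omega
    · rintro ht
      subst ht
      constructor
      · simp
      · simp
  · intro μ₂ hμ₂
    set red : (Fin q → ℤ) →ₗ[ℤ] (Fin q → ZMod 2) :=
      LinearMap.pi fun i =>
        (Int.castRingHom (ZMod 2)).toAddMonoidHom.toIntLinearMap.comp (LinearMap.proj i) with hred
    have hredapp : ∀ t : Fin q → ℤ, red t = fun i => ((t i : ℤ) : ZMod 2) := fun t => rfl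
    set f : ((Fin p → ℤ) × (Fin q → ℤ)) →ₗ[ℤ] (Fin p → ZMod 2) :=
      (μ₂.restrictScalars ℤ) ∘ₗ red ∘ₗ (LinearMap.snd ℤ _ _) with hf
    have hfapp : ∀ v : (Fin p → ℤ) × (Fin q → ℤ),
        f v = fun j => ((μ v.2 j : ℤ) : ZMod 2) := by
      intro v
      simp only [hf, LinearMap.comp_apply, LinearMap.snd_apply, LinearMap.restrictScalars_apply,
        hredapp]
      exact hμ₂ v.2
    have hker : LinearMap.ker (1 - τ : Module.End ℤ ((Fin p → ℤ) × (Fin q → ℤ))) ⊔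
        LinearMap.ker (1 + τ : Module.End ℤ ((Fin p → ℤ) × (Fin q → ℤ))) = LinearMap.ker f := by
      apply le_antisymm
      · apply sup_le
        · intro v hv
          simp only [LinearMap.mem_ker, LinearMap.sub_apply, Module.End.one_apply,
            sub_eq_zero] at hv
          have h2 : v.2 = -v.2 := by
            have := congrArg Prod.snd hv
            rw [show τ v = τ (v.1, v.2) from rfl, hτ] at this
            exact this
          have hv2 : v.2 = 0 := by
            funext i
            have := congrFun h2 i
            simp only [Pi.neg_apply] at this
            simp only [Pi.zero_apply]
            omega
          simp only [LinearMap.mem_ker, hfapp, hv2, map_zero, Pi.zero_apply, Int.cast_zero]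
          rfl
        · intro v hv
          simp only [LinearMap.mem_ker, LinearMap.add_apply, Module.End.one_apply] at hv
          have h1 : v.1 + (v.1 + μ v.2) = 0 := by
            have := congrArg Prod.fst hv
            rw [show τ v = τ (v.1, v.2) from rfl, hτ] at this
            exact this
          simp only [LinearMap.mem_ker, hfapp]
          funext j
          have := congrFun h1 j
          simp only [Pi.add_apply, Pi.zero_apply] at this
          rw [Pi.zero_apply]
          exact (ZMod.intCast_zmod_eq_zero_iff_dvd _ 2).mpr ⟨-(v.1 j), by omega⟩
      · intro v hv
        simp only [LinearMap.mem_ker, hfapp] at hv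
        have heven : ∀ j, 2 ∣ μ v.2 j := by
          intro j
          have := congrFun hv j
          simpa [ZMod.intCast_zmod_eq_zero_iff_dvd] using this
        set y : Fin p → ℤ := fun j => μ v.2 j / 2 with hy
        have hyy : ∀ j, μ v.2 j = 2 * y j := fun j =>
          (Int.mul_ediv_cancel' (heven j)).symm
        have hdecomp : v = (v.1 + y, (0 : Fin q → ℤ)) + (-y, v.2) := by
          ext <;> simp
        rw [hdecomp]
        apply Submodule.add_mem
        · apply Submodule.mem_sup_left
          simp only [LinearMap.mem_ker, LinearMap.sub_apply, Module.End.one_apply, hτ]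
          simp
        · apply Submodule.mem_sup_right
          simp only [LinearMap.mem_ker, LinearMap.add_apply, Module.End.one_apply, hτ]
          rw [Prod.ext_iff]
          constructor
          · funext j
            have := hyy j
            simp only [Prod.fst_add, Pi.add_apply, Pi.neg_apply, Prod.fst_zero, Pi.zero_apply]
            omega
          · simp
    rw [hker]
    have e1 := (LinearMap.quotKerEquivRange f).toEquiv
    rw [Nat.card_congr e1]
    have hrange : (LinearMap.range f : Set (Fin p → ZMod 2)) =
        (LinearMap.range μ₂ : Set (Fin p → ZMod 2)) := by
      ext w
      constructor
      · rintro ⟨v, rfl⟩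
        exact ⟨red v.2, by simp [hf]⟩
      · rintro ⟨u, rfl⟩
        obtain ⟨t, ht⟩ : ∃ t : Fin q → ℤ, red t = u := by
          refine ⟨fun i => (u i).val, ?_⟩
          funext i
          simp [hredapp, ZMod.natCast_val, ZMod.intCast_cast, ZMod.cast_id]
        exact ⟨(0, t), by simp [hf, ht]⟩
    have h2 : Nat.card (LinearMap.range f) = Nat.card (LinearMap.range μ₂) :=
      Nat.card_congr (Equiv.setCongr hrange)
    rw [h2]
    have : Nat.card (LinearMap.range μ₂) =
        Fintype.card (LinearMap.range μ₂) := Nat.card_eq_fintype_card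
    rw [this, Module.card_eq_pow_finrank (K := ZMod 2) (V := LinearMap.range μ₂), ZMod.card]
end

section
/- Let A be an m×m integer matrix and A' an n×n integer matrix with A² = I and A'² = I, and let B be an n×m integer matrix satisfying B·A = A'·B. Let f : (ℂˣ)^m → (ℂˣ)^n be the group homomorphism f(z)_j = ∏_{i=1}^m z_i^{B_{ji}}, and assume f is surjective. Then the image under f of the fixed subgroup {z ∈ (ℂˣ)^m : σ_A(z) = z} is an open subgroup of finite index (hence also closed) of the fixed subgroup {w ∈ (ℂˣ)^n : σ_{A'}(w) = w}. -/
theorem zpow_sum' {G : Type*} [CommGroup G] (z : G) {ι : Type*} (s : Finset ι) (f : ι → ℤ) :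
    z ^ (∑ i ∈ s, f i) = ∏ i ∈ s, z ^ f i := by
  classical
  induction s using Finset.induction with
  | empty => simp
  | insert _ _ h ih => simp [Finset.sum_insert h, Finset.prod_insert h, zpow_add, ih]

theorem matZPow_apply {m n : ℕ} (B : Matrix (Fin n) (Fin m) ℤ) (z : Fin m → ℂˣ) (j : Fin n) :
    matZPow B z j = ∏ i, z i ^ B j i := rfl

theorem matZPow_matZPow {m n p : ℕ} (B₁ : Matrix (Fin p) (Fin n) ℤ) (B₂ : Matrix (Fin n) (Fin m) ℤ)
    (z : Fin m → ℂˣ) : matZPow B₁ (matZPow B₂ z) = matZPow (B₁ * B₂) z := by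
  funext j
  simp only [matZPow_apply]
  have : ∀ i, (∏ k, z k ^ B₂ i k) ^ B₁ j i = ∏ k, z k ^ (B₁ j i * B₂ i k) := by
    intro i
    rw [← Finset.prod_zpow]
    exact Finset.prod_congr rfl fun k _ => by rw [mul_comm, zpow_mul]
  simp only [this]
  rw [Finset.prod_comm]
  exact Finset.prod_congr rfl fun k _ => by rw [← zpow_sum']; rfl

theorem matZPow_one {n : ℕ} (z : Fin n → ℂˣ) : matZPow (1 : Matrix (Fin n) (Fin n) ℤ) z = z := by
  funext j
  simp [matZPow_apply, Matrix.one_apply]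

abbrev conjU : ℂˣ →* ℂˣ := Units.map (starRingEnd ℂ).toMonoidHom

theorem matZPow_conj {m n : ℕ} (B : Matrix (Fin n) (Fin m) ℤ) (z : Fin m → ℂˣ) :
    matZPow B (fun i => conjU (z i)) = fun j => conjU (matZPow B z j) := by
  funext j
  simp only [matZPow_apply, ← map_zpow, ← map_prod]

theorem sigmaMat_apply {n : ℕ} (A : Matrix (Fin n) (Fin n) ℤ) (z : Fin n → ℂˣ) :
    sigmaMat A z = matZPow A (fun i => conjU (z i)) := rfl

theorem sigmaMat_matZPow {m n : ℕ} (A : Matrix (Fin m) (Fin m) ℤ) (A' : Matrix (Fin n) (Fin n) ℤ)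
    (B : Matrix (Fin n) (Fin m) ℤ) (hBA : B * A = A' * B) (z : Fin m → ℂˣ) :
    matZPow B (sigmaMat A z) = sigmaMat A' (matZPow B z) := by
  rw [sigmaMat_apply, matZPow_matZPow, sigmaMat_apply, ← matZPow_conj, matZPow_matZPow, hBA]

theorem sigmaMat_sigmaMat {n : ℕ} (A : Matrix (Fin n) (Fin n) ℤ) (hA : A * A = 1)
    (z : Fin n → ℂˣ) : sigmaMat A (sigmaMat A z) = z := by
  have h1 : sigmaMat A (sigmaMat A z) =
      matZPow A (fun i => conjU ((matZPow A (fun i => conjU (z i))) i)) := rfl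
  have h2 : (fun i => conjU ((matZPow A (fun i => conjU (z i))) i)) =
      matZPow A (fun i => conjU (conjU (z i))) := (matZPow_conj A (fun i => conjU (z i))).symm
  have hcc : (fun i => conjU (conjU (z i))) = z := by
    funext i; ext; simp [conjU]
  rw [h1, h2, hcc, matZPow_matZPow, hA, matZPow_one]


theorem sigmaMat_val {n : ℕ} (A' : Matrix (Fin n) (Fin n) ℤ) (w : Fin n → ℂˣ) (j : Fin n) :
    ((sigmaMat A' w j : ℂˣ) : ℂ) = ∏ i, (starRingEnd ℂ ((w i : ℂ))) ^ (A' j i) := by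
  show ((∏ i, Units.map (starRingEnd ℂ).toMonoidHom (w i) ^ A' j i : ℂˣ) : ℂ) = _
  rw [show ((∏ i, Units.map (starRingEnd ℂ).toMonoidHom (w i) ^ A' j i : ℂˣ) : ℂ)
      = (Units.coeHom ℂ) (∏ i, Units.map (starRingEnd ℂ).toMonoidHom (w i) ^ A' j i) from rfl,
    map_prod (Units.coeHom ℂ)]
  exact Finset.prod_congr rfl fun i _ => by
    rw [Units.coeHom_apply, Units.val_zpow_eq_zpow_val, Units.coe_map]; rfl

open Real in
theorem exists_sqrt_of_close {n : ℕ} (A' : Matrix (Fin n) (Fin n) ℤ) :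
    ∃ ε > 0, ∀ w : Fin n → ℂˣ, sigmaMat A' w = w → (∀ i, ‖(w i : ℂ) - 1‖ < ε) →
      ∃ v : Fin n → ℂˣ, sigmaMat A' v = v ∧ v ^ 2 = w ∧
        ∀ i, ‖(w i : ℂ)‖ = 1 → ‖(v i : ℂ)‖ = 1 := by
  classical
  set C : ℝ := (∑ j, ∑ i, |(A' j i : ℝ)|) + 1 with hC
  have hsum_nonneg : (0:ℝ) ≤ ∑ j, ∑ i, |(A' j i : ℝ)| :=
    Finset.sum_nonneg fun j _ => Finset.sum_nonneg fun i _ => abs_nonneg _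
  have hCpos : 0 < C := by positivity
  have hη : 0 < π / C := div_pos Real.pi_pos hCpos
  obtain ⟨ε, hε, hεlog⟩ := Metric.continuousAt_iff.1
    (continuousAt_clog Complex.one_mem_slitPlane) (π / C) hη
  refine ⟨ε, hε, fun w hw hwε => ?_⟩
  set l : Fin n → ℂ := fun i => Complex.log ((w i : ℂ)) with hl
  have hexp : ∀ i, Complex.exp (l i) = (w i : ℂ) := fun i => Complex.exp_log (Units.ne_zero _)
  have hlsmall : ∀ i, ‖l i‖ < π / C := by
    intro i
    have h1 : dist ((w i : ℂ)) 1 < ε := by simpa [Complex.dist_eq] using hwε i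
    have := hεlog h1
    rwa [Complex.log_one, dist_zero_right] at this
  have key : ∀ j, ∑ i, (A' j i : ℂ) * (starRingEnd ℂ) (l i) = l j := by
    intro j
    have hj : ((sigmaMat A' w j : ℂˣ) : ℂ) = ((w j : ℂˣ) : ℂ) := by rw [hw]
    rw [sigmaMat_val] at hj
    have hprod : ∏ i, (starRingEnd ℂ) ((w i : ℂ)) ^ (A' j i)
        = Complex.exp (∑ i, (A' j i : ℂ) * (starRingEnd ℂ) (l i)) := by
      rw [Complex.exp_sum]
      refine Finset.prod_congr rfl fun i _ => ?_
      rw [← hexp i, ← Complex.exp_conj, ← Complex.exp_int_mul]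
    rw [hprod, ← hexp j, Complex.exp_eq_exp_iff_exists_int] at hj
    obtain ⟨k, hk⟩ := hj
    have hrow : (∑ i, |(A' j i : ℝ)|) + 1 ≤ C := by
      rw [hC]
      have : ∑ i, |(A' j i : ℝ)| ≤ ∑ j', ∑ i, |(A' j' i : ℝ)| :=
        Finset.single_le_sum (f := fun j' => ∑ i, |(A' j' i : ℝ)|)
          (fun j' _ => Finset.sum_nonneg fun i _ => abs_nonneg _) (Finset.mem_univ j)
      linarith
    have hnorm : ‖∑ i, (A' j i : ℂ) * (starRingEnd ℂ) (l i) - l j‖ < π := by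
      have h1 : ‖∑ i, (A' j i : ℂ) * (starRingEnd ℂ) (l i)‖ ≤ (∑ i, |(A' j i : ℝ)|) * (π / C) := by
        calc ‖∑ i, (A' j i : ℂ) * (starRingEnd ℂ) (l i)‖
            ≤ ∑ i, ‖(A' j i : ℂ) * (starRingEnd ℂ) (l i)‖ := norm_sum_le _ _
          _ ≤ ∑ i, |(A' j i : ℝ)| * (π / C) := by
              refine Finset.sum_le_sum fun i _ => ?_
              rw [norm_mul]
              have e1 : ‖((A' j i : ℤ) : ℂ)‖ = |(A' j i : ℝ)| := by
                push_cast
                simp [Complex.norm_real]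
              have e2 : ‖(starRingEnd ℂ) (l i)‖ = ‖l i‖ := by
                simpa using (norm_star (l i) : ‖star (l i)‖ = ‖l i‖)
              rw [e1, e2]
              exact mul_le_mul_of_nonneg_left (le_of_lt (hlsmall i)) (abs_nonneg _)
          _ = (∑ i, |(A' j i : ℝ)|) * (π / C) := (Finset.sum_mul _ _ _).symm
      have h2 : ‖l j‖ < π / C := hlsmall j
      have h3 : ((∑ i, |(A' j i : ℝ)|) + 1) * (π / C) ≤ C * (π / C) :=
        mul_le_mul_of_nonneg_right hrow (le_of_lt hη)
      have h4 : C * (π / C) = π := by field_simp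
      calc ‖∑ i, (A' j i : ℂ) * (starRingEnd ℂ) (l i) - l j‖
          ≤ ‖∑ i, (A' j i : ℂ) * (starRingEnd ℂ) (l i)‖ + ‖l j‖ := norm_sub_le _ _
        _ < (∑ i, |(A' j i : ℝ)|) * (π / C) + π / C := by
            exact add_lt_add_of_le_of_lt h1 h2
        _ = ((∑ i, |(A' j i : ℝ)|) + 1) * (π / C) := by ring
        _ ≤ C * (π / C) := h3
        _ = π := h4
    have hk0 : k = 0 := by
      by_contra hk0
      have : (1:ℝ) ≤ |(k:ℝ)| := by
        have : (1:ℤ) ≤ |k| := Int.one_le_abs (by exact_mod_cast hk0)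
        exact_mod_cast this
      have hnk : ‖(k : ℂ) * (2 * ↑π * Complex.I)‖ = |(k:ℝ)| * (2 * π) := by
        rw [norm_mul]
        have e1 : ‖((k:ℤ) : ℂ)‖ = |(k:ℝ)| := by push_cast; simp [Complex.norm_real]
        have e2 : ‖(2 * (π:ℂ) * Complex.I)‖ = 2 * π := by
          simp [norm_mul, Complex.norm_real, abs_of_pos Real.pi_pos]
        rw [e1, e2]
      have hgε : 2 * π ≤ |(k:ℝ)| * (2 * π) := by
        nlinarith [Real.pi_pos]
      have : ‖∑ i, (A' j i : ℂ) * (starRingEnd ℂ) (l i) - l j‖ = |(k:ℝ)| * (2 * π) := by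
        rw [hk]; simp only [add_sub_cancel_left]; exact hnk
      nlinarith [Real.pi_pos, hnorm, this]
    rw [hk0] at hk
    simpa using hk
  -- construct the square root
  refine ⟨fun i => Units.mk0 (Complex.exp (l i / 2)) (Complex.exp_ne_zero _), ?_, ?_, ?_⟩
  · funext j
    ext
    rw [sigmaMat_val]
    have hstep : ∀ i, (starRingEnd ℂ) (Complex.exp (l i / 2)) ^ (A' j i)
        = Complex.exp ((A' j i : ℂ) * ((starRingEnd ℂ) (l i) / 2)) := by
      intro i
      rw [← Complex.exp_conj, ← Complex.exp_int_mul, map_div₀, map_ofNat]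
    calc (∏ i, (starRingEnd ℂ) ((Units.mk0 (Complex.exp (l i / 2))
            (Complex.exp_ne_zero _) : ℂˣ) : ℂ) ^ (A' j i))
        = ∏ i, Complex.exp ((A' j i : ℂ) * ((starRingEnd ℂ) (l i) / 2)) := by
          exact Finset.prod_congr rfl fun i _ => hstep i
      _ = Complex.exp (∑ i, (A' j i : ℂ) * ((starRingEnd ℂ) (l i) / 2)) :=
          (Complex.exp_sum _ _).symm
      _ = Complex.exp ((∑ i, (A' j i : ℂ) * (starRingEnd ℂ) (l i)) / 2) := by
          rw [Finset.sum_div]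
          congr 1
          exact Finset.sum_congr rfl fun i _ => (mul_div_assoc _ _ _).symm
      _ = Complex.exp (l j / 2) := by rw [key j]
  · funext i
    ext
    rw [Pi.pow_apply, Units.val_pow_eq_pow_val, Units.val_mk0, sq, ← Complex.exp_add,
      add_halves, hexp]
  · intro i hwi
    have h1 : Real.exp ((l i).re) = 1 := by
      rw [← hexp i] at hwi
      simpa [Complex.norm_exp] using hwi
    have h2 : (l i).re = 0 := Real.exp_eq_exp.mp (by rw [Real.exp_zero]; exact h1)
    show ‖Complex.exp (l i / 2)‖ = 1
    rw [Complex.norm_exp]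
    simp [Complex.div_re, h2]

theorem continuous_matZPow {m n : ℕ} (B : Matrix (Fin n) (Fin m) ℤ) :
    Continuous (matZPow B) := by
  refine continuous_pi fun j => ?_
  have h : ∀ i : Fin m, Continuous fun z : Fin m → ℂˣ => z i ^ B j i :=
    fun i => (continuous_apply i).zpow _
  exact continuous_finset_prod Finset.univ fun i _ => h i

theorem continuous_conjU : Continuous (Units.map (starRingEnd ℂ).toMonoidHom : ℂˣ → ℂˣ) := by
  rw [Units.continuous_iff]
  constructor
  · exact Complex.continuous_conj.comp Units.continuous_val
  · have : (fun u : ℂˣ => ((Units.map (starRingEnd ℂ).toMonoidHom u)⁻¹ : ℂˣ) ) =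
        fun u => Units.map (starRingEnd ℂ).toMonoidHom u⁻¹ := by
      funext u; rw [← map_inv]
    show Continuous fun u : ℂˣ => (((Units.map (starRingEnd ℂ).toMonoidHom u)⁻¹ : ℂˣ) : ℂ)
    have h2 : (fun u : ℂˣ => (((Units.map (starRingEnd ℂ).toMonoidHom u)⁻¹ : ℂˣ) : ℂ)) =
        fun u : ℂˣ => starRingEnd ℂ ((u⁻¹ : ℂˣ) : ℂ) := by
      funext u
      rw [← map_inv]
      rfl
    rw [h2]
    exact Complex.continuous_conj.comp (Units.continuous_val.comp continuous_inv)

theorem continuous_sigmaMat {n : ℕ} (A : Matrix (Fin n) (Fin n) ℤ) :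
    Continuous (sigmaMat A) := by
  refine (continuous_matZPow A).comp ?_
  exact continuous_pi fun i => continuous_conjU.comp (continuous_apply i)

theorem isCompact_normOne {n : ℕ} :
    IsCompact {w : Fin n → ℂˣ | ∀ i, ‖(w i : ℂ)‖ = 1} := by
  have hψ : Continuous (fun q : Fin n → Circle => fun i => Circle.toUnits (q i)) := by
    refine continuous_pi fun i => ?_
    rw [Units.continuous_iff]
    constructor
    · exact continuous_subtype_val.comp (continuous_apply i)
    · show Continuous fun q : Fin n → Circle => (((Circle.toUnits (q i))⁻¹ : ℂˣ) : ℂ)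
      have heq : (fun q : Fin n → Circle => (((Circle.toUnits (q i))⁻¹ : ℂˣ) : ℂ)) =
          fun q : Fin n → Circle => (((q i)⁻¹ : Circle) : ℂ) := by
        funext q
        rw [← map_inv]
        rfl
      rw [heq]
      exact continuous_subtype_val.comp
        ((continuous_inv (G := Circle)).comp (continuous_apply (A := fun _ : Fin n => Circle) i))
  have := (isCompact_univ (X := Fin n → Circle)).image hψ
  convert this using 1
  ext w
  simp only [Set.mem_setOf_eq, Set.image_univ, Set.mem_range]
  constructor
  · intro hw
    refine ⟨fun i => ⟨(w i : ℂ), by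
      show (w i : ℂ) ∈ Submonoid.unitSphere ℂ
      simpa [Submonoid.unitSphere] using mem_sphere_zero_iff_norm.2 (hw i)⟩, ?_⟩
    funext i
    ext
    rfl
  · rintro ⟨q, rfl⟩ i
    show ‖((Circle.toUnits (q i) : ℂˣ) : ℂ)‖ = 1
    have : ((Circle.toUnits (q i) : ℂˣ) : ℂ) = ((q i : Circle) : ℂ) := rfl
    rw [this]
    exact mem_sphere_zero_iff_norm.1 (q i).2

theorem mem_fixedSubgroup_iff {G : Type*} [Group G] (σ : G →* G) (z : G) :
    z ∈ fixedSubgroup σ ↔ σ z = z := Iff.rfl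

section main
variable {m n : ℕ} {A : Matrix (Fin m) (Fin m) ℤ} {A' : Matrix (Fin n) (Fin n) ℤ}
  {B : Matrix (Fin n) (Fin m) ℤ} (hA : A * A = 1) (hA' : A' * A' = 1)
  (hBA : B * A = A' * B) (hsurj : Function.Surjective (matZPow B))

include hBA in
theorem map_le_fixed :
    Subgroup.map (matZPow B) (fixedSubgroup (sigmaMat A)) ≤ fixedSubgroup (sigmaMat A') := by
  rintro w ⟨z, hz, rfl⟩
  have hz' : sigmaMat A z = z := hz
  show sigmaMat A' (matZPow B z) = matZPow B z
  rw [← sigmaMat_matZPow A A' B hBA, hz']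

include hA hBA hsurj in
theorem sq_mem_map (w : Fin n → ℂˣ) (hw : w ∈ fixedSubgroup (sigmaMat A')) :
    w ^ 2 ∈ Subgroup.map (matZPow B) (fixedSubgroup (sigmaMat A)) := by
  obtain ⟨z, rfl⟩ := hsurj w
  have hw' : sigmaMat A' (matZPow B z) = matZPow B z := hw
  refine ⟨z * sigmaMat A z, ?_, ?_⟩
  · show sigmaMat A (z * sigmaMat A z) = z * sigmaMat A z
    rw [map_mul, sigmaMat_sigmaMat A hA, mul_comm]
  · rw [map_mul, sigmaMat_matZPow A A' B hBA, hw', sq]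
end main


set_option maxHeartbeats 1000000 in
set_option synthInstance.maxHeartbeats 200000 in
/-- **Images of real points under surjections of real tori.** Let `A` (`m×m`) and `A'`
(`n×n`) be integer matrices with `A² = I`, `A'² = I`, and `B` (`n×m`) with `BA = A'B`.
If the monoid homomorphism `f : (ℂˣ)^m → (ℂˣ)^n`, `f(z)_j = ∏ i, z i ^ B j i`, is
surjective, then the image under `f` of the fixed subgroup of `σ_A` is an open (hence
also closed) subgroup of finite index of the fixed subgroup of `σ_{A'}`. -/
theorem stmt_13 (m n : ℕ) (A : Matrix (Fin m) (Fin m) ℤ) (A' : Matrix (Fin n) (Fin n) ℤ)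
    (B : Matrix (Fin n) (Fin m) ℤ) (hA : A * A = 1) (hA' : A' * A' = 1)
    (hBA : B * A = A' * B)
    (hsurj : Function.Surjective (matZPow B)) :
    Subgroup.map (matZPow B) (fixedSubgroup (sigmaMat A)) ≤ fixedSubgroup (sigmaMat A') ∧
    IsOpen (((Subgroup.map (matZPow B) (fixedSubgroup (sigmaMat A))).subgroupOf
      (fixedSubgroup (sigmaMat A')) : Subgroup (fixedSubgroup (sigmaMat A'))) :
        Set (fixedSubgroup (sigmaMat A'))) ∧
    IsClosed (((Subgroup.map (matZPow B) (fixedSubgroup (sigmaMat A))).subgroupOf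
      (fixedSubgroup (sigmaMat A')) : Subgroup (fixedSubgroup (sigmaMat A'))) :
        Set (fixedSubgroup (sigmaMat A'))) ∧
    ((Subgroup.map (matZPow B) (fixedSubgroup (sigmaMat A))).subgroupOf
      (fixedSubgroup (sigmaMat A'))).index ≠ 0 := by
  classical
  obtain ⟨ε, hε, hsq⟩ := exists_sqrt_of_close A'
  set H : Type := (Fin n → ℂˣ) with hH
  set K : Subgroup (Fin n → ℂˣ) := fixedSubgroup (sigmaMat A') with hKdef
  set S : Subgroup (Fin n → ℂˣ) := Subgroup.map (matZPow B) (fixedSubgroup (sigmaMat A)) with hSdef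
  have hle : S ≤ K := map_le_fixed hBA
  have hsqS : ∀ w : Fin n → ℂˣ, w ∈ K → w ^ 2 ∈ S := fun w hw => sq_mem_map hA hBA hsurj w hw
  -- the basic open set
  set O : Set (Fin n → ℂˣ) := {w | ∀ i, ‖(w i : ℂ) - 1‖ < ε} with hOdef
  have hOopen : IsOpen O := by
    have hO2 : O = ⋂ i, {w : Fin n → ℂˣ | ‖(w i : ℂ) - 1‖ < ε} := by
      ext w; simp [hOdef, Set.mem_iInter]
    rw [hO2]
    refine isOpen_iInter_of_finite fun i => ?_
    have hc : Continuous fun w : Fin n → ℂˣ => ‖((w i : ℂ)) - 1‖ :=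
      ((Units.continuous_val.comp (continuous_apply i)).sub continuous_const).norm
    exact isOpen_lt hc continuous_const
  have hOone : (1 : Fin n → ℂˣ) ∈ O := by intro i; simpa using hε
  have hOK : ∀ k : K, (k : Fin n → ℂˣ) ∈ O → k ∈ S.subgroupOf K := by
    intro k hk
    obtain ⟨v, hv, hv2, -⟩ := hsq (k : Fin n → ℂˣ) k.2 hk
    rw [Subgroup.mem_subgroupOf, ← hv2]
    exact hsqS v hv
  have hnhds : ((S.subgroupOf K : Subgroup K) : Set K) ∈ nhds (1 : K) := by
    refine Filter.mem_of_superset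
      ((hOopen.preimage continuous_subtype_val).mem_nhds ?_) ?_
    · exact hOone
    · intro k hk
      exact hOK k hk
  have hopen : IsOpen ((S.subgroupOf K : Subgroup K) : Set K) :=
    Subgroup.isOpen_of_mem_nhds _ hnhds
  refine ⟨hle, hopen, (S.subgroupOf K).isClosed_of_isOpen hopen, ?_⟩
  -- finite index
  set Q : Subgroup K := (powMonoidHom 2 : K →* K).range with hQdef
  have hQle : Q ≤ S.subgroupOf K := by
    rintro q ⟨x, rfl⟩
    rw [Subgroup.mem_subgroupOf]
    have : ((powMonoidHom 2 x : K) : Fin n → ℂˣ) = (x : Fin n → ℂˣ) ^ 2 := rfl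
    rw [this]
    exact hsqS _ x.2
  -- the compact subgroup U
  set U : Subgroup K :=
    { carrier := {k : K | ∀ i, ‖((k : Fin n → ℂˣ) i : ℂ)‖ = 1}
      one_mem' := by intro i; simp
      mul_mem' := by
        intro a b ha hb i
        have : (((a * b : K) : Fin n → ℂˣ) i : ℂ) =
            ((a : Fin n → ℂˣ) i : ℂ) * ((b : Fin n → ℂˣ) i : ℂ) := rfl
        rw [this, norm_mul, ha i, hb i, mul_one]
      inv_mem' := by
        intro a ha i
        have h1 : (((a⁻¹ : K) : Fin n → ℂˣ) i) = ((a : Fin n → ℂˣ) i)⁻¹ := rfl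
        rw [h1, Units.val_inv_eq_inv_val, norm_inv, ha i, inv_one] } with hUdef
  -- U is compact
  have hUcompact : IsCompact (U : Set K) := by
    rw [Subtype.isCompact_iff]
    have himg : Subtype.val '' (U : Set K) =
        {w : Fin n → ℂˣ | sigmaMat A' w = w} ∩ {w : Fin n → ℂˣ | ∀ i, ‖(w i : ℂ)‖ = 1} := by
      ext w
      constructor
      · rintro ⟨k, hk, rfl⟩
        exact ⟨k.2, hk⟩
      · rintro ⟨h1, h2⟩
        exact ⟨⟨w, h1⟩, h2, rfl⟩
    rw [himg]
    exact isCompact_normOne.inter_left (isClosed_eq (continuous_sigmaMat A') continuous_id)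
  haveI hUcs : CompactSpace U := isCompact_iff_compactSpace.mp hUcompact
  -- squares of U form an open subgroup of U
  set sqU : Subgroup U := (powMonoidHom 2 : U →* U).range with hsqUdef
  have hsqUopen : IsOpen ((sqU : Subgroup U) : Set U) := by
    refine Subgroup.isOpen_of_mem_nhds (g := 1) _ ?_
    have hcont : Continuous fun u : U => ((u : K) : Fin n → ℂˣ) :=
      continuous_subtype_val.comp continuous_subtype_val
    refine Filter.mem_of_superset ((hOopen.preimage hcont).mem_nhds ?_) ?_
    · exact hOone
    · intro u hu
      obtain ⟨v, hv, hv2, hv1⟩ := hsq (((u : K) : Fin n → ℂˣ)) (u : K).2 hu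
      have hvnorm : ∀ i, ‖(v i : ℂ)‖ = 1 := fun i => hv1 i (u.2 i)
      refine ⟨⟨⟨v, hv⟩, hvnorm⟩, ?_⟩
      apply Subtype.ext
      apply Subtype.ext
      exact hv2
  haveI hfinU : Finite (U ⧸ sqU) := Subgroup.quotient_finite_of_isOpen sqU hsqUopen
  -- the homomorphism φ : U →* K ⧸ Q
  set φ : U →* K ⧸ Q := (QuotientGroup.mk' Q).comp U.subtype with hφdef
  have hker : ∀ u ∈ sqU, φ u = 1 := by
    rintro u ⟨x, rfl⟩
    exact (QuotientGroup.eq_one_iff _).mpr ⟨(x : K), rfl⟩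
  -- surjectivity of φ via polar decomposition
  have hφsurj : Function.Surjective φ := by
    intro q
    obtain ⟨k, rfl⟩ := QuotientGroup.mk'_surjective Q q
    have tpos : ∀ i, (0:ℝ) < ‖((k : Fin n → ℂˣ) i : ℂ)‖ :=
      fun i => norm_pos_iff.2 (Units.ne_zero _)
    set t : Fin n → ℝ := fun i => ‖((k : Fin n → ℂˣ) i : ℂ)‖ with htdef
    set x : Fin n → ℝ := fun i => t i ^ (2⁻¹ : ℝ) with hxdef
    have xpos : ∀ i, 0 < x i := fun i => Real.rpow_pos_of_pos (tpos i) _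
    set r : Fin n → ℂˣ := fun i => Units.mk0 ((x i : ℝ) : ℂ)
      (by exact_mod_cast (ne_of_gt (xpos i))) with hrdef
    -- the norm identity for k
    have hnorm_j : ∀ j, ∏ i, t i ^ (A' j i) = t j := by
      intro j
      have hkj : ((sigmaMat A' (k : Fin n → ℂˣ) j : ℂˣ) : ℂ) = (((k : Fin n → ℂˣ) j : ℂˣ) : ℂ) := by
        rw [k.2]
      rw [sigmaMat_val] at hkj
      have := congrArg norm hkj
      rw [norm_prod] at this
      calc ∏ i, t i ^ (A' j i)
          = ∏ i, ‖(starRingEnd ℂ) (((k : Fin n → ℂˣ) i : ℂ)) ^ A' j i‖ := by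
            refine Finset.prod_congr rfl fun i _ => ?_
            rw [norm_zpow, RCLike.norm_conj]
        _ = t j := this
    -- r is fixed by σ
    have hrK : sigmaMat A' r = r := by
      funext j
      ext
      rw [sigmaMat_val]
      have hstep : ∀ i, (starRingEnd ℂ) ((r i : ℂ)) ^ (A' j i) = ((x i ^ (A' j i) : ℝ) : ℂ) := by
        intro i
        have h1 : ((r i : ℂ)) = ((x i : ℝ) : ℂ) := rfl
        rw [h1, Complex.conj_ofReal, Complex.ofReal_zpow]
      rw [Finset.prod_congr rfl fun i _ => hstep i, ← Complex.ofReal_prod]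
      have hfac : ∀ i : Fin n, x i ^ (A' j i) = (t i ^ (A' j i)) ^ (2⁻¹ : ℝ) := by
        intro i
        rw [← Real.rpow_intCast (x i) (A' j i), ← Real.rpow_intCast (t i) (A' j i), hxdef]
        rw [← Real.rpow_mul (le_of_lt (tpos i)), ← Real.rpow_mul (le_of_lt (tpos i)), mul_comm]
      have hreal : ∏ i, x i ^ (A' j i) = x j := by
        calc ∏ i, x i ^ (A' j i)
            = ∏ i, (t i ^ (A' j i)) ^ (2⁻¹ : ℝ) := Finset.prod_congr rfl fun i _ => hfac i
          _ = (∏ i, t i ^ (A' j i)) ^ (2⁻¹ : ℝ) :=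
              Real.finset_prod_rpow _ _ (fun i _ => le_of_lt (zpow_pos (tpos i) _)) _
          _ = (t j) ^ (2⁻¹ : ℝ) := by rw [hnorm_j j]
          _ = x j := rfl
      rw [hreal]
      rfl
    -- polar decomposition: k = sK^2 * u with u of norm one
    set sK : K := ⟨r, hrK⟩ with hsKdef
    set u : K := k * (sK ^ 2)⁻¹ with hudef
    have hx2 : ∀ i, x i ^ (2 : ℕ) = t i := by
      intro i
      have h0 : x i ^ (2 : ℕ) = t i ^ ((2⁻¹ : ℝ) * ((2:ℕ) : ℝ)) := by
        rw [← Real.rpow_natCast (x i) 2, hxdef, ← Real.rpow_mul (le_of_lt (tpos i))]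
      rw [h0, show ((2⁻¹ : ℝ) * ((2:ℕ) : ℝ)) = 1 by norm_num, Real.rpow_one]
    have hu : u ∈ U := by
      intro i
      have h1 : ((u : Fin n → ℂˣ) i) = ((k : Fin n → ℂˣ) i) * (((r i) ^ (2:ℕ))⁻¹) := by
        rw [hudef]
        push_cast
        rfl
      rw [h1, Units.val_mul, norm_mul, Units.val_inv_eq_inv_val, norm_inv,
        Units.val_pow_eq_pow_val, norm_pow]
      have h2 : ‖(r i : ℂ)‖ = x i := by
        have : ((r i : ℂ)) = ((x i : ℝ) : ℂ) := rfl
        rw [this, Complex.norm_real, Real.norm_eq_abs, abs_of_pos (xpos i)]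
      rw [h2, hx2 i]
      exact mul_inv_cancel₀ (ne_of_gt (tpos i))
    refine ⟨⟨u, hu⟩, ?_⟩
    have hsq1 : QuotientGroup.mk' Q (sK ^ 2) = 1 :=
      (QuotientGroup.eq_one_iff _).mpr ⟨sK, rfl⟩
    show QuotientGroup.mk' Q u = QuotientGroup.mk' Q k
    rw [hudef, map_mul, map_inv, hsq1, inv_one]
    exact mul_one ((QuotientGroup.mk' Q) k)
  -- conclude
  have hfinKQ : Finite (K ⧸ Q) := by
    have hliftsurj : Function.Surjective (QuotientGroup.lift sqU φ hker) := by
      intro q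
      obtain ⟨u, rfl⟩ := hφsurj q
      exact ⟨QuotientGroup.mk u, rfl⟩
    exact Finite.of_surjective _ hliftsurj
  haveI := hfinKQ
  have hQind : Q.index ≠ 0 := Subgroup.index_ne_zero_of_finite
  have hdvd : (S.subgroupOf K).index ∣ Q.index := Subgroup.index_dvd_of_le hQle
  intro h0
  rw [h0] at hdvd
  exact hQind (zero_dvd_iff.mp hdvd)
end
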